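/- arXiv:2005.08941 — 5 statements merged into one kernel-verified Lean document; each statement's English description precedes it below -/
import Mathlib

section
/- Let Ω ⊂ ℝ² be a compact convex set with 0 in its interior and Ω° its polar set. For any angles θ, ψ ∈ ℝ, the generalized trigonometric functions satisfy cos_Ω θ · cos_{Ω°} ψ + sin_Ω θ · sin_{Ω°} ψ ≤ 1. -/
open MeasureTheory Real Set

/-- Counterclockwise polar angle of a point of the plane, in `[0, 2π)`. -/
noncomputable def polarAngle (v : ℝ × ℝ) : ℝ :=
  if 0 ≤ Complex.arg ((v.1 : ℂ) + (v.2 : ℂ) * Complex.I) then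
    Complex.arg ((v.1 : ℂ) + (v.2 : ℂ) * Complex.I)
  else Complex.arg ((v.1 : ℂ) + (v.2 : ℂ) * Complex.I) + 2 * Real.pi

/-- Area of the sector of `Ω` between the positive `x`-axis and the polar angle `β`. -/
noncomputable def sectorArea (Ω : Set (ℝ × ℝ)) (β : ℝ) : ℝ :=
  (volume {v | v ∈ Ω ∧ polarAngle v ≤ β}).toReal

/-- Area of a planar set. -/
noncomputable def area2 (Ω : Set (ℝ × ℝ)) : ℝ := (volume Ω).toReal

/-- `P : ℝ → ℝ × ℝ`, `P θ = (cos_Ω θ, sin_Ω θ)`, is the sector-area parametrization of `∂Ω`: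
for `θ ∈ [0, 2𝕊)` (where `𝕊 = area Ω`), `P θ ∈ ∂Ω` and the sector of `Ω` between the
positive `x`-axis and the ray `O P θ` has area `θ/2`; `P` is `2𝕊`-periodic. -/
def IsCT (Ω : Set (ℝ × ℝ)) (P : ℝ → ℝ × ℝ) : Prop :=
  (∀ θ : ℝ, P (θ + 2 * area2 Ω) = P θ) ∧
  ∀ θ ∈ Set.Ico (0 : ℝ) (2 * area2 Ω),
    P θ ∈ frontier Ω ∧ sectorArea Ω (polarAngle (P θ)) = θ / 2

/-- The polar set `Ω° = {q : ⟨q, v⟩ ≤ 1 ∀ v ∈ Ω}`. -/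
def polarSet (Ω : Set (ℝ × ℝ)) : Set (ℝ × ℝ) :=
  {q | ∀ v ∈ Ω, q.1 * v.1 + q.2 * v.2 ≤ 1}

/-- The covector `q` determines a supporting half-plane of `Ω` at `x`. -/
def Supports (Ω : Set (ℝ × ℝ)) (x q : ℝ × ℝ) : Prop :=
  q.1 * x.1 + q.2 * x.2 = 1 ∧ ∀ v ∈ Ω, q.1 * v.1 + q.2 * v.2 ≤ 1

/-- A CT parametrization lands in the set, provided the set is closed with positive area. -/
lemma aux_mem_of_CT (Ω : Set (ℝ × ℝ)) (hcl : IsClosed Ω)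
    (hpos : 0 < area2 Ω) (P : ℝ → ℝ × ℝ) (hP : IsCT Ω P) (θ : ℝ) : P θ ∈ Ω := by
  have hper : Function.Periodic P (2 * area2 Ω) := hP.1
  obtain ⟨y, hy, hxy⟩ := hper.exists_mem_Ico₀ (by linarith) θ
  rw [hxy]
  have := (hP.2 y hy).1
  exact hcl.frontier_subset this

/-- The polar set is closed. -/
lemma aux_polar_closed (Ω : Set (ℝ × ℝ)) : IsClosed (polarSet Ω) := by
  have : polarSet Ω = ⋂ v ∈ Ω, {q : ℝ × ℝ | q.1 * v.1 + q.2 * v.2 ≤ 1} := by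
    ext q; simp [polarSet]
  rw [this]
  refine isClosed_biInter fun v _ => isClosed_le (by fun_prop) continuous_const

lemma aux_area_pos (Ω : Set (ℝ × ℝ)) (ε : ℝ) (hε : 0 < ε)
    (hsub : Metric.ball (0 : ℝ × ℝ) ε ⊆ Ω) (hbound : Bornology.IsBounded Ω) :
    0 < area2 Ω := by
  have hfin : volume Ω < ⊤ := hbound.measure_lt_top
  have h1 : 0 < volume (Metric.ball (0 : ℝ × ℝ) ε) := Metric.measure_ball_pos volume 0 hε
  have h2 : 0 < volume Ω := lt_of_lt_of_le h1 (measure_mono hsub)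
  exact ENNReal.toReal_pos h2.ne' hfin.ne

/-- For any angles `θ, ψ`, `cos_Ω θ · cos_{Ω°} ψ + sin_Ω θ · sin_{Ω°} ψ ≤ 1`. -/
theorem stmt1 (Ω : Set (ℝ × ℝ)) (hcomp : IsCompact Ω) (hconv : Convex ℝ Ω)
    (h0 : (0 : ℝ × ℝ) ∈ interior Ω)
    (P Q : ℝ → ℝ × ℝ) (hP : IsCT Ω P) (hQ : IsCT (polarSet Ω) Q)
    (θ ψ : ℝ) :
    (P θ).1 * (Q ψ).1 + (P θ).2 * (Q ψ).2 ≤ 1 := by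
  -- a small ball inside Ω
  obtain ⟨ε, hε, hball⟩ := Metric.isOpen_iff.1 isOpen_interior 0 h0
  have hballΩ : Metric.ball (0 : ℝ × ℝ) ε ⊆ Ω := hball.trans interior_subset
  -- Ω is bounded: inside some ball of radius R > 0
  obtain ⟨R₀, hR₀⟩ := hcomp.isBounded.subset_closedBall 0
  set R : ℝ := max R₀ 1 with hRdef
  have hR : 0 < R := lt_of_lt_of_le one_pos (le_max_right _ _)
  have hΩR : Ω ⊆ Metric.closedBall 0 R :=
    hR₀.trans (Metric.closedBall_subset_closedBall (le_max_left _ _))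
  -- area of Ω positive
  have hA : 0 < area2 Ω := aux_area_pos Ω ε hε hballΩ hcomp.isBounded
  -- P θ ∈ Ω
  have hPθ : P θ ∈ Ω := aux_mem_of_CT Ω hcomp.isClosed hA P hP θ
  -- polar set contains a small ball
  have hpolarball : Metric.ball (0 : ℝ × ℝ) (1 / (2 * R)) ⊆ polarSet Ω := by
    intro q hq v hv
    have hq' : ‖q‖ < 1 / (2 * R) := by simpa using hq
    have hv' : ‖v‖ ≤ R := by simpa using hΩR hv
    have hq1 : |q.1| ≤ ‖q‖ := by simpa [Real.norm_eq_abs] using norm_fst_le q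
    have hq2 : |q.2| ≤ ‖q‖ := by simpa [Real.norm_eq_abs] using norm_snd_le q
    have hv1 : |v.1| ≤ ‖v‖ := by simpa [Real.norm_eq_abs] using norm_fst_le v
    have hv2 : |v.2| ≤ ‖v‖ := by simpa [Real.norm_eq_abs] using norm_snd_le v
    have e1 : q.1 * v.1 ≤ |q.1| * |v.1| := by
      calc q.1 * v.1 ≤ |q.1 * v.1| := le_abs_self _
        _ = |q.1| * |v.1| := abs_mul _ _
    have e2 : q.2 * v.2 ≤ |q.2| * |v.2| := by
      calc q.2 * v.2 ≤ |q.2 * v.2| := le_abs_self _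
        _ = |q.2| * |v.2| := abs_mul _ _
    have hqnn : (0:ℝ) ≤ ‖q‖ := norm_nonneg _
    have f1 : |q.1| * |v.1| ≤ ‖q‖ * R := by
      apply mul_le_mul hq1 (hv1.trans hv') (abs_nonneg _) hqnn
    have f2 : |q.2| * |v.2| ≤ ‖q‖ * R := by
      apply mul_le_mul hq2 (hv2.trans hv') (abs_nonneg _) hqnn
    have key : ‖q‖ * R < 1 / 2 := by
      have := mul_lt_mul_of_pos_right hq' hR
      calc ‖q‖ * R < 1 / (2 * R) * R := this
        _ = 1 / 2 := by field_simp
    linarith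
  have hpolarbdd : Bornology.IsBounded (polarSet Ω) := by
    have hsub2 : polarSet Ω ⊆ Metric.closedBall 0 (2 / ε) := by
      intro q hq
      have m1 : ((ε/2, 0) : ℝ × ℝ) ∈ Ω := by
        apply hballΩ
        simp only [Metric.mem_ball, dist_zero_right, Prod.norm_def, Real.norm_eq_abs,
          abs_neg, abs_zero, abs_of_pos (show (0:ℝ) < ε/2 by linarith)]
        exact max_lt (by linarith) (by linarith)
      have m2 : ((-(ε/2), 0) : ℝ × ℝ) ∈ Ω := by
        apply hballΩ
        simp only [Metric.mem_ball, dist_zero_right, Prod.norm_def, Real.norm_eq_abs,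
          abs_neg, abs_zero, abs_of_pos (show (0:ℝ) < ε/2 by linarith)]
        exact max_lt (by linarith) (by linarith)
      have m3 : ((0, ε/2) : ℝ × ℝ) ∈ Ω := by
        apply hballΩ
        simp only [Metric.mem_ball, dist_zero_right, Prod.norm_def, Real.norm_eq_abs,
          abs_neg, abs_zero, abs_of_pos (show (0:ℝ) < ε/2 by linarith)]
        exact max_lt (by linarith) (by linarith)
      have m4 : ((0, -(ε/2)) : ℝ × ℝ) ∈ Ω := by
        apply hballΩ
        simp only [Metric.mem_ball, dist_zero_right, Prod.norm_def, Real.norm_eq_abs,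
          abs_neg, abs_zero, abs_of_pos (show (0:ℝ) < ε/2 by linarith)]
        exact max_lt (by linarith) (by linarith)
      have b1 := hq _ m1
      have b2 := hq _ m2
      have b3 := hq _ m3
      have b4 := hq _ m4
      simp only at b1 b2 b3 b4
      have h1 : |q.1| ≤ 2 / ε := by
        rw [abs_le]
        refine ⟨?_, ?_⟩
        · rw [neg_le, le_div_iff₀ hε]; nlinarith
        · rw [le_div_iff₀ hε]; nlinarith
      have h2 : |q.2| ≤ 2 / ε := by
        rw [abs_le]
        refine ⟨?_, ?_⟩
        · rw [neg_le, le_div_iff₀ hε]; nlinarith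
        · rw [le_div_iff₀ hε]; nlinarith
      simp only [Metric.mem_closedBall, dist_zero_right, Prod.norm_def, Real.norm_eq_abs]
      exact max_le h1 h2
    exact Metric.isBounded_closedBall.subset hsub2
  have hA' : 0 < area2 (polarSet Ω) :=
    aux_area_pos _ _ (by positivity) hpolarball hpolarbdd
  have hQψ : Q ψ ∈ polarSet Ω := aux_mem_of_CT _ (aux_polar_closed Ω) hA' Q hQ ψ
  have := hQψ (P θ) hPθ
  linarith
end

section
/- The Jacobian determinant of the generalized polar change of coordinates x = r cos_Ω θ, y = r sin_Ω θ equals r (at every point where θ ↦ (cos_Ω θ, sin_Ω θ) is differentiable). -/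
open MeasureTheory Real Set

open MeasureTheory Real Set Filter
open scoped ENNReal

namespace Stmt9Aux

def cross (u v : ℝ × ℝ) : ℝ := u.1 * v.2 - u.2 * v.1

lemma polarAngle_mem (v : ℝ × ℝ) : polarAngle v ∈ Ico 0 (2 * π) := by
  have h1 := Complex.arg_le_pi ((v.1 : ℂ) + (v.2 : ℂ) * Complex.I)
  have h2 := Complex.neg_pi_lt_arg ((v.1 : ℂ) + (v.2 : ℂ) * Complex.I)
  have hπ := Real.pi_pos
  unfold polarAngle
  split <;> constructor <;> linarith

lemma polarAngle_zero : polarAngle 0 = 0 := by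
  simp [polarAngle]

lemma measurable_polarAngle : Measurable polarAngle := by
  have hg : Measurable fun v : ℝ × ℝ => Complex.arg ((v.1 : ℂ) + (v.2 : ℂ) * Complex.I) := by
    apply Complex.measurable_arg.comp
    fun_prop
  unfold polarAngle
  exact Measurable.ite (hg measurableSet_Ici) hg (hg.add_const _)

lemma polar_repr (v : ℝ × ℝ) (hv : v ≠ 0) :
    ∃ ρ : ℝ, 0 < ρ ∧ v.1 = ρ * Real.cos (polarAngle v) ∧ v.2 = ρ * Real.sin (polarAngle v) := by
  set z : ℂ := (v.1 : ℂ) + (v.2 : ℂ) * Complex.I with hzdef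
  have hre : z.re = v.1 := by simp [hzdef]
  have him : z.im = v.2 := by simp [hzdef]
  have hz : z ≠ 0 := by
    intro h
    apply hv
    have h1 : v.1 = 0 := by rw [← hre, h]; simp
    have h2 : v.2 = 0 := by rw [← him, h]; simp
    exact Prod.ext h1 h2
  have habs : 0 < ‖z‖ := norm_pos_iff.2 hz
  have hcos : Real.cos (polarAngle v) = Real.cos (Complex.arg z) := by
    unfold polarAngle
    split <;> simp [hzdef, Real.cos_add_two_pi]
  have hsin : Real.sin (polarAngle v) = Real.sin (Complex.arg z) := by
    unfold polarAngle
    split <;> simp [hzdef, Real.sin_add_two_pi]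
  refine ⟨‖z‖, habs, ?_, ?_⟩
  · rw [hcos, Complex.cos_arg hz, ← hre]; field_simp
  · rw [hsin, Complex.sin_arg, ← him]; field_simp

lemma sin_nonneg_cases {d : ℝ} (h1 : -(2 * π) < d) (h2 : d < 2 * π) (hs : 0 ≤ Real.sin d) :
    d ≤ -π ∨ (0 ≤ d ∧ d ≤ π) := by
  have hπ := Real.pi_pos
  by_contra hcon
  push_neg at hcon
  obtain ⟨hd1, hd2⟩ := hcon
  rcases lt_or_ge d 0 with hneg | hpos
  · have := Real.sin_neg_of_neg_of_neg_pi_lt hneg hd1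
    linarith
  · have hdπ : π < d := hd2 hpos
    have h3 : Real.sin (d - π) = -Real.sin d := Real.sin_sub_pi d
    have h4 : 0 < Real.sin (d - π) := Real.sin_pos_of_pos_of_lt_pi (by linarith) (by linarith)
    linarith

lemma sin_pos_cases {d : ℝ} (h1 : -π ≤ d) (h2 : d < 2 * π) (hs : 0 < Real.sin d) :
    0 < d ∧ d < π := by
  have hπ := Real.pi_pos
  constructor
  · by_contra h
    push_neg at h
    have := Real.sin_nonpos_of_nonpos_of_neg_pi_le h h1  -- check hypothesis order
    linarith
  · by_contra h
    push_neg at h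
    rcases eq_or_lt_of_le h with h' | h'
    · rw [← h'] at hs; simp [Real.sin_pi] at hs
    · have h3 : Real.sin (d - π) = -Real.sin d := Real.sin_sub_pi d
      have h4 : 0 ≤ Real.sin (d - π) := Real.sin_nonneg_of_nonneg_of_le_pi (by linarith) (by linarith)
      linarith

lemma nonneg_factor {c s : ℝ} (hc : 0 < c) (h : 0 ≤ c * s) : 0 ≤ s := by
  by_contra h'
  push_neg at h'
  nlinarith [mul_pos hc (neg_pos.2 h')]

lemma pos_factor {c s : ℝ} (hc : 0 < c) (h : 0 < c * s) : 0 < s := by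
  by_contra h'
  push_neg at h'
  nlinarith

lemma cross_eq {a x : ℝ × ℝ} {ρ σ : ℝ}
    (ha : a.1 = ρ * Real.cos (polarAngle a) ∧ a.2 = ρ * Real.sin (polarAngle a))
    (hx : x.1 = σ * Real.cos (polarAngle x) ∧ x.2 = σ * Real.sin (polarAngle x)) :
    cross a x = ρ * σ * Real.sin (polarAngle x - polarAngle a) := by
  simp only [cross, ha.1, ha.2, hx.1, hx.2, Real.sin_sub]
  ring

lemma polar_between {a b x : ℝ × ℝ} (ha : a ≠ 0) (hb : b ≠ 0) (hx : x ≠ 0)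
    (hab : polarAngle a < polarAngle b) (hπ : polarAngle b - polarAngle a < π)
    (h1 : 0 ≤ cross a x) (h2 : 0 ≤ cross x b) :
    polarAngle a ≤ polarAngle x ∧ polarAngle x ≤ polarAngle b := by
  obtain ⟨ρa, hρa, hra⟩ := polar_repr a ha
  obtain ⟨ρb, hρb, hrb⟩ := polar_repr b hb
  obtain ⟨ρx, hρx, hrx⟩ := polar_repr x hx
  have hma := polarAngle_mem a
  have hmb := polarAngle_mem b
  have hmx := polarAngle_mem x
  simp only [mem_Ico] at hma hmb hmx
  have hπ0 := Real.pi_pos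
  have e1 : cross a x = ρa * ρx * Real.sin (polarAngle x - polarAngle a) := cross_eq hra hrx
  have e2 : cross x b = ρx * ρb * Real.sin (polarAngle b - polarAngle x) := cross_eq hrx hrb
  have s1 : 0 ≤ Real.sin (polarAngle x - polarAngle a) := by
    rw [e1] at h1; exact nonneg_factor (mul_pos hρa hρx) h1
  have s2 : 0 ≤ Real.sin (polarAngle b - polarAngle x) := by
    rw [e2] at h2; exact nonneg_factor (mul_pos hρx hρb) h2
  have c1 := sin_nonneg_cases (d := polarAngle x - polarAngle a) (by linarith) (by linarith) s1
  have c2 := sin_nonneg_cases (d := polarAngle b - polarAngle x) (by linarith) (by linarith) s2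
  rcases c1 with c1 | c1 <;> rcases c2 with c2 | c2 <;> constructor <;> linarith

lemma cross_nonneg_left {a x : ℝ × ℝ} (ha : a ≠ 0) (hx : x ≠ 0)
    (h1 : polarAngle a ≤ polarAngle x) (h2 : polarAngle x - polarAngle a ≤ π) :
    0 ≤ cross a x := by
  obtain ⟨ρa, hρa, hra⟩ := polar_repr a ha
  obtain ⟨ρx, hρx, hrx⟩ := polar_repr x hx
  rw [cross_eq hra hrx]
  have := Real.sin_nonneg_of_nonneg_of_le_pi (by linarith) h2
  exact mul_nonneg (mul_nonneg hρa.le hρx.le) this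

lemma polar_halfplane {a x : ℝ × ℝ} (ha : a ≠ 0) (hαπ : polarAngle a ≤ π)
    (h : 0 < cross a x) :
    polarAngle a < polarAngle x ∧ polarAngle x < polarAngle a + π := by
  have hx : x ≠ 0 := by
    intro h0
    rw [h0] at h
    simp [cross] at h
  obtain ⟨ρa, hρa, hra⟩ := polar_repr a ha
  obtain ⟨ρx, hρx, hrx⟩ := polar_repr x hx
  have hma := polarAngle_mem a
  have hmx := polarAngle_mem x
  simp only [mem_Ico] at hma hmx
  have hπ0 := Real.pi_pos
  have s1 : 0 < Real.sin (polarAngle x - polarAngle a) := by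
    rw [cross_eq hra hrx] at h; exact pos_factor (mul_pos hρa hρx) h
  have := sin_pos_cases (d := polarAngle x - polarAngle a) (by linarith) (by linarith) s1
  constructor <;> linarith

lemma combo_mem {Ω : Set (ℝ × ℝ)} (hconv : Convex ℝ Ω) (h0 : (0 : ℝ × ℝ) ∈ Ω)
    {a b : ℝ × ℝ} (ha : a ∈ Ω) (hb : b ∈ Ω) {s t : ℝ} (hs : 0 ≤ s) (ht : 0 ≤ t)
    (hst : s + t ≤ 1) : (s * a.1 + t * b.1, s * a.2 + t * b.2) ∈ Ω := by
  rcases eq_or_lt_of_le (by linarith : (0:ℝ) ≤ s + t) with h | h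
  · have hs0 : s = 0 := by linarith
    have ht0 : t = 0 := by linarith
    simp only [hs0, ht0, zero_mul, add_zero]; exact h0
  · have hy : (s / (s + t)) • a + (t / (s + t)) • b ∈ Ω :=
      hconv ha hb (div_nonneg hs h.le) (div_nonneg ht h.le) (by field_simp)
    have hz : (s + t) • ((s / (s + t)) • a + (t / (s + t)) • b) + (1 - (s + t)) • (0 : ℝ × ℝ) ∈ Ω :=
      hconv hy h0 h.le (by linarith) (by ring)
    have heq : (s * a.1 + t * b.1, s * a.2 + t * b.2)
        = (s + t) • ((s / (s + t)) • a + (t / (s + t)) • b) + (1 - (s + t)) • (0 : ℝ × ℝ) := by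
      have hne : s + t ≠ 0 := h.ne'
      ext <;>
        simp only [Prod.fst_add, Prod.smul_fst, Prod.fst_zero, Prod.snd_add, Prod.smul_snd,
          Prod.snd_zero, smul_eq_mul] <;>
        field_simp <;> ring
    rw [heq]
    exact hz

def T0 : Set (ℝ × ℝ) := {p | 0 ≤ p.1 ∧ 0 ≤ p.2 ∧ p.1 + p.2 ≤ 1}

lemma null_line (c : ℝ × ℝ) (hc : c ≠ 0) (t : ℝ) :
    volume {v : ℝ × ℝ | c.1 * v.1 + c.2 * v.2 = t} = 0 := by
  set f : (ℝ × ℝ) →ₗ[ℝ] ℝ :=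
    { toFun := fun v => c.1 * v.1 + c.2 * v.2
      map_add' := by intro x y; simp; ring
      map_smul' := by intro m x; simp; ring }
  have hcc : 0 < c.1 * c.1 + c.2 * c.2 := by
    have h1 : c.1 ≠ 0 ∨ c.2 ≠ 0 := by
      by_contra h; push_neg at h; exact hc (Prod.ext h.1 h.2)
    rcases h1 with h | h <;> nlinarith [mul_self_pos.2 h, mul_self_nonneg c.1, mul_self_nonneg c.2]
  have hker : LinearMap.ker f ≠ ⊤ := by
    intro h
    have : f c = 0 := by
      have : c ∈ LinearMap.ker f := by rw [h]; trivial
      simpa using this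
    simp only [f, LinearMap.coe_mk, AddHom.coe_mk] at this
    nlinarith
  set p₀ : ℝ × ℝ := (t / (c.1 * c.1 + c.2 * c.2)) • c with hp₀
  have hfp₀ : f p₀ = t := by
    simp only [f, hp₀, LinearMap.coe_mk, AddHom.coe_mk, Prod.smul_fst, Prod.smul_snd,
      smul_eq_mul]
    have hne : c.1 * c.1 + c.2 * c.2 ≠ 0 := hcc.ne'
    calc _ = t * (c.1 * c.1 + c.2 * c.2) / (c.1 * c.1 + c.2 * c.2) := by ring
      _ = t := mul_div_cancel_right₀ t hne
  have hset : {v : ℝ × ℝ | c.1 * v.1 + c.2 * v.2 = t}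
      = (fun v => v + (-p₀)) ⁻¹' (LinearMap.ker f : Set (ℝ × ℝ)) := by
    ext v
    simp only [mem_setOf_eq, mem_preimage, SetLike.mem_coe, LinearMap.mem_ker, map_add,
      map_neg, hfp₀]
    constructor
    · intro h; simp only [f, LinearMap.coe_mk, AddHom.coe_mk] at *; linarith
    · intro h; simp only [f, LinearMap.coe_mk, AddHom.coe_mk] at *; linarith
  rw [hset, measure_preimage_add_right]
  exact Measure.addHaar_submodule volume (LinearMap.ker f) hker

lemma volume_T0 : volume T0 = ENNReal.ofReal (1 / 2) := by
  set R : Set (ℝ × ℝ) := regionBetween (fun _ => (0 : ℝ)) (fun x => 1 - x) (Ioo 0 1) with hR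
  have hint : IntegrableOn (fun x : ℝ => 1 - x) (Ioo 0 1) volume :=
    ((continuous_const.sub continuous_id).integrableOn_Icc.mono_set Ioo_subset_Icc_self)
  have hvolR : volume R = ENNReal.ofReal (1 / 2) := by
    rw [MeasureTheory.Measure.volume_eq_prod]
    rw [volume_regionBetween_eq_integral
      (integrableOn_const (by simp [Real.volume_Ioo]))
      hint
      measurableSet_Ioo (fun x hx => by simp only [mem_Ioo] at hx; linarith [hx.2])]
    congr 1
    simp only [Pi.sub_apply, sub_zero]
    have h1 : (∫ y in Ioo (0:ℝ) 1, (1 - y)) = ∫ y in (0:ℝ)..1, (1 - y) := by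
      rw [intervalIntegral.integral_of_le zero_le_one,
        ← MeasureTheory.integral_Ioc_eq_integral_Ioo]
    rw [h1]
    rw [intervalIntegral.integral_sub intervalIntegrable_const intervalIntegral.intervalIntegrable_id]
    simp
    norm_num
  -- T0 and R differ by null sets
  have hRT : R ⊆ T0 := by
    intro p hp
    obtain ⟨hp1, hp2⟩ := hp
    simp only [mem_Ioo] at hp1 hp2
    exact ⟨hp1.1.le, hp2.1.le, by linarith [hp2.2]⟩
  have hTR : T0 ⊆ R ∪ ({v : ℝ × ℝ | (1:ℝ) * v.1 + (0:ℝ) * v.2 = 0}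
      ∪ ({v : ℝ × ℝ | (0:ℝ) * v.1 + (1:ℝ) * v.2 = 0}
      ∪ {v : ℝ × ℝ | (1:ℝ) * v.1 + (1:ℝ) * v.2 = 1})) := by
    intro p hp
    obtain ⟨h1, h2, h3⟩ := hp
    rcases eq_or_lt_of_le h1 with e1 | l1
    · exact Or.inr (Or.inl (by simpa using e1.symm))
    rcases eq_or_lt_of_le h2 with e2 | l2
    · exact Or.inr (Or.inr (Or.inl (by simpa using e2.symm)))
    rcases eq_or_lt_of_le h3 with e3 | l3
    · exact Or.inr (Or.inr (Or.inr (by simpa using e3)))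
    · exact Or.inl ⟨⟨l1, by linarith⟩, ⟨l2, by simp only [mem_Ioo]; linarith⟩⟩
  have hnull : volume (({v : ℝ × ℝ | (1:ℝ) * v.1 + (0:ℝ) * v.2 = 0}
      ∪ ({v : ℝ × ℝ | (0:ℝ) * v.1 + (1:ℝ) * v.2 = 0}
      ∪ {v : ℝ × ℝ | (1:ℝ) * v.1 + (1:ℝ) * v.2 = 1}))) = 0 := by
    refine measure_union_null ?_ (measure_union_null ?_ ?_)
    · exact null_line (1, 0) (by simp) 0
    · exact null_line (0, 1) (by simp) 0
    · exact null_line (1, 1) (by simp) 1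
  refine le_antisymm ?_ ?_
  · calc volume T0 ≤ volume (R ∪ _) := measure_mono hTR
      _ ≤ volume R + _ := measure_union_le _ _
      _ = ENNReal.ofReal (1/2) := by rw [hvolR, hnull, add_zero]
  · rw [← hvolR]; exact measure_mono hRT

noncomputable def lmap (a b : ℝ × ℝ) : (ℝ × ℝ) →ₗ[ℝ] (ℝ × ℝ) where
  toFun := fun p => (p.1 * a.1 + p.2 * b.1, p.1 * a.2 + p.2 * b.2)
  map_add' := by intro x y; ext <;> simp <;> ring
  map_smul' := by intro m x; ext <;> simp <;> ring

lemma det_lmap (a b : ℝ × ℝ) : LinearMap.det (lmap a b) = cross a b := by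
  rw [← LinearMap.det_toMatrix (Module.Basis.finTwoProd ℝ), Matrix.det_fin_two]
  simp [LinearMap.toMatrix_apply, lmap, Module.Basis.finTwoProd_zero, Module.Basis.finTwoProd_one,
    Module.Basis.coe_finTwoProd_repr, cross]
  ring

lemma volume_img (a b : ℝ × ℝ) (h : 0 ≤ cross a b) :
    volume (lmap a b '' T0) = ENNReal.ofReal (cross a b / 2) := by
  rw [Measure.addHaar_image_linearMap, det_lmap, volume_T0, abs_of_nonneg h,
    ← ENNReal.ofReal_mul h, mul_one_div]

lemma mem_img {a b v : ℝ × ℝ} (hD : 0 < cross a b) (h1 : 0 ≤ cross a v) (h2 : 0 ≤ cross v b)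
    (h3 : cross a v + cross v b ≤ cross a b) : v ∈ lmap a b '' T0 := by
  refine ⟨(cross v b / cross a b, cross a v / cross a b),
    ⟨div_nonneg h2 hD.le, div_nonneg h1 hD.le, ?_⟩, ?_⟩
  · rw [← add_div, div_le_one hD]; linarith
  · have hD' : a.1 * b.2 - a.2 * b.1 ≠ 0 := by simpa [cross] using hD.ne'
    show ((cross v b / cross a b) * a.1 + (cross a v / cross a b) * b.1,
      (cross v b / cross a b) * a.2 + (cross a v / cross a b) * b.2) = v
    ext
    · show _ = v.1
      simp only [cross]
      rw [div_mul_eq_mul_div, div_mul_eq_mul_div, ← add_div, div_eq_iff hD']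
      ring
    · show _ = v.2
      simp only [cross]
      rw [div_mul_eq_mul_div, div_mul_eq_mul_div, ← add_div, div_eq_iff hD']
      ring

lemma img_elem {a b : ℝ × ℝ} {x : ℝ × ℝ} (hx : x ∈ lmap a b '' T0) :
    ∃ s t : ℝ, 0 ≤ s ∧ 0 ≤ t ∧ s + t ≤ 1 ∧ x = (s * a.1 + t * b.1, s * a.2 + t * b.2) := by
  obtain ⟨p, hp, rfl⟩ := hx
  exact ⟨p.1, p.2, hp.1, hp.2.1, hp.2.2, rfl⟩

end Stmt9Aux

open Stmt9Aux in
set_option maxHeartbeats 1000000 in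
/-- The Jacobian determinant of the generalized polar change of coordinates
`x = r cos_Ω θ`, `y = r sin_Ω θ` equals `r` at every point where
`θ ↦ (cos_Ω θ, sin_Ω θ)` is differentiable. -/
theorem stmt9 (Ω : Set (ℝ × ℝ)) (hcomp : IsCompact Ω) (hconv : Convex ℝ Ω)
    (h0 : (0 : ℝ × ℝ) ∈ interior Ω)
    (P : ℝ → ℝ × ℝ) (hP : IsCT Ω P)
    (r θ c' s' : ℝ)
    (hc : HasDerivAt (fun t => (P t).1) c' θ)
    (hs : HasDerivAt (fun t => (P t).2) s' θ) :
    Matrix.det !![(P θ).1, r * c'; (P θ).2, r * s'] = r := by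
  classical
  have hπ0 := Real.pi_pos
  have h0Ω : (0 : ℝ × ℝ) ∈ Ω := interior_subset h0
  obtain ⟨ε, hε, hball⟩ : ∃ ε > 0, Metric.ball (0 : ℝ × ℝ) ε ⊆ Ω :=
    Metric.mem_nhds_iff.1 (mem_interior_iff_mem_nhds.1 h0)
  have hΩfin : volume Ω < ⊤ := hcomp.measure_lt_top
  set S : ℝ := area2 Ω with hSdef
  have hSpos : 0 < S := by
    have h1 : (0 : ℝ≥0∞) < volume (Metric.ball (0 : ℝ × ℝ) ε) :=
      Metric.measure_ball_pos volume 0 hε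
    have h2 : volume (Metric.ball (0 : ℝ × ℝ) ε) ≤ volume Ω := measure_mono hball
    refine ENNReal.toReal_pos (fun h => ?_) hΩfin.ne
    rw [h] at h2
    exact h1.ne' (le_antisymm h2 zero_le)
  have hper : Function.Periodic P (2 * S) := hP.1
  set n : ℤ := ⌊θ / (2 * S)⌋ with hn
  set θ₀ : ℝ := θ - n * (2 * S) with hθ₀def
  have h2S : (0:ℝ) < 2 * S := by linarith
  have hθ₀0 : 0 ≤ θ₀ := Int.sub_floor_div_mul_nonneg θ h2S
  have hθ₀2S : θ₀ < 2 * S := Int.sub_floor_div_mul_lt θ h2S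
  have hPeq : ∀ t : ℝ, P (t + n * (2 * S)) = P t := by
    intro t
    have := hper.sub_int_mul_eq (x := t + n * (2 * S)) (n := n)
    simpa using this.symm
  have hθeq : θ₀ + n * (2 * S) = θ := by rw [hθ₀def]; ring
  have hc0 : HasDerivAt (fun t => (P t).1) c' θ₀ := by
    have hi : HasDerivAt (fun t : ℝ => t + n * (2 * S)) 1 θ₀ := by
      simpa using (hasDerivAt_id θ₀).add_const ((n : ℝ) * (2 * S))
    have h1 : HasDerivAt ((fun u => (P u).1) ∘ fun t : ℝ => t + n * (2 * S)) (c' * 1) θ₀ :=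
      HasDerivAt.comp θ₀ (hθeq ▸ hc) hi
    simp only [Function.comp_def] at h1
    simpa [hPeq] using h1
  have hs0 : HasDerivAt (fun t => (P t).2) s' θ₀ := by
    have hi : HasDerivAt (fun t : ℝ => t + n * (2 * S)) 1 θ₀ := by
      simpa using (hasDerivAt_id θ₀).add_const ((n : ℝ) * (2 * S))
    have h1 : HasDerivAt ((fun u => (P u).2) ∘ fun t : ℝ => t + n * (2 * S)) (s' * 1) θ₀ :=
      HasDerivAt.comp θ₀ (hθeq ▸ hs) hi
    simp only [Function.comp_def] at h1
    simpa [hPeq] using h1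
  have hPθ : P θ = P θ₀ := by rw [← hθeq, hPeq]
  set a : ℝ × ℝ := P θ₀ with hadef
  obtain ⟨haF, hsect0⟩ := hP.2 θ₀ ⟨hθ₀0, hθ₀2S⟩
  have hnotint : ∀ x : ℝ × ℝ, x ∈ frontier Ω → x ∉ interior Ω := by
    intro x hx
    rw [frontier, Set.mem_diff] at hx
    exact hx.2
  have hfrsub : frontier Ω ⊆ Ω := hcomp.isClosed.frontier_subset
  have hfr_ne : ∀ x : ℝ × ℝ, x ∈ frontier Ω → x ≠ 0 := by
    intro x hx h
    exact hnotint x hx (h ▸ h0)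
  have ha0 : a ≠ 0 := hfr_ne a haF
  have haΩ : a ∈ Ω := hfrsub haF
  set α : ℝ := polarAngle a with hαdef
  have hαico : α ∈ Ico 0 (2 * π) := polarAngle_mem a
  -- supporting functional at a
  obtain ⟨f, hf⟩ : ∃ f : (ℝ × ℝ) →L[ℝ] ℝ, ∀ b ∈ interior Ω, f b < f a :=
    geometric_hahn_banach_open_point (hconv.interior) isOpen_interior (hnotint a haF)
  have hfa : 0 < f a := by
    have := hf 0 h0
    simpa using this
  have hfle : ∀ v ∈ Ω, f v ≤ f a := by
    intro v hv
    have key : ∀ t : ℝ, t ∈ Ioc (0:ℝ) 1 → (1 - t) * f v < f a := by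
      intro t ht
      have hmem : t • (0 : ℝ × ℝ) + (1 - t) • v ∈ interior Ω :=
        hconv.combo_interior_closure_mem_interior h0 (subset_closure hv) ht.1
          (by linarith [ht.2]) (by ring)
      have := hf _ hmem
      simpa [smul_eq_mul] using this
    have hten : Tendsto (fun t : ℝ => (1 - t) * f v) (nhdsWithin 0 (Ioi 0)) (nhds (f v)) := by
      have : Continuous (fun t : ℝ => (1 - t) * f v) := by continuity
      have h1 := this.tendsto 0
      simp only [sub_zero, one_mul] at h1
      exact h1.mono_left nhdsWithin_le_nhds
    refine le_of_tendsto hten ?_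
    filter_upwards [Ioo_mem_nhdsGT_of_mem (Set.mem_Ico.2 ⟨le_refl (0:ℝ), zero_lt_one⟩)] with t ht
    exact (key t ⟨ht.1, ht.2.le⟩).le
  -- sector sets
  set Sset : ℝ → Set (ℝ × ℝ) := fun β => {v | v ∈ Ω ∧ polarAngle v ≤ β} with hSset
  have hsec : ∀ β, sectorArea Ω β = (volume (Sset β)).toReal := fun β => rfl
  have hmeas : ∀ β, MeasurableSet (Sset β) := by
    intro β
    have : Sset β = Ω ∩ polarAngle ⁻¹' Iic β := by ext v; simp [hSset, Set.mem_inter_iff]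
    rw [this]
    exact hcomp.isClosed.measurableSet.inter (measurable_polarAngle measurableSet_Iic)
  have hfin : ∀ β, volume (Sset β) ≠ ⊤ := by
    intro β
    exact ((measure_mono (fun v hv => hv.1 : Sset β ⊆ Ω)).trans_lt hΩfin).ne
  have hsub : ∀ β β', β ≤ β' → Sset β ⊆ Sset β' := by
    intro β β' h v hv
    exact ⟨hv.1, hv.2.trans h⟩
  -- continuity of shifted P at 0
  have hc1 : HasDerivAt (fun h : ℝ => (P (θ₀ + h)).1) c' 0 := by
    have hi : HasDerivAt (fun h : ℝ => θ₀ + h) 1 0 := by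
      simpa using (hasDerivAt_id (0:ℝ)).const_add θ₀
    have h1 : HasDerivAt ((fun u => (P u).1) ∘ fun h : ℝ => θ₀ + h) (c' * 1) 0 :=
      HasDerivAt.comp 0 (by simpa using hc0) hi
    simpa [Function.comp_def] using h1
  have hs1 : HasDerivAt (fun h : ℝ => (P (θ₀ + h)).2) s' 0 := by
    have hi : HasDerivAt (fun h : ℝ => θ₀ + h) 1 0 := by
      simpa using (hasDerivAt_id (0:ℝ)).const_add θ₀
    have h1 : HasDerivAt ((fun u => (P u).2) ∘ fun h : ℝ => θ₀ + h) (s' * 1) 0 :=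
      HasDerivAt.comp 0 (by simpa using hs0) hi
    simpa [Function.comp_def] using h1
  have hPcont : ContinuousAt (fun h : ℝ => P (θ₀ + h)) 0 := by
    have := hc1.continuousAt.prodMk hs1.continuousAt
    simpa using this
  -- the open half-disc used to rule out large angle jumps
  obtain ⟨ρa, hρa, hrepra⟩ := polar_repr a ha0
  set U : Set (ℝ × ℝ) := {v | v ∈ Metric.ball (0 : ℝ × ℝ) ε ∧ 0 < cross a v} with hU
  have hUopen : IsOpen U := by
    apply Metric.isOpen_ball.inter
    have : Continuous fun v : ℝ × ℝ => cross a v := by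
      simp only [cross]
      fun_prop
    exact isOpen_lt continuous_const this
  have hUne : U.Nonempty := by
    refine ⟨(ε / 2) • (-Real.sin α, Real.cos α), ?_, ?_⟩
    · rw [Metric.mem_ball, dist_zero_right]
      rw [norm_smul]
      have h1 : ‖((-Real.sin α, Real.cos α) : ℝ × ℝ)‖ ≤ 1 := by
        rw [Prod.norm_def]
        simp only [norm_neg, Real.norm_eq_abs]
        exact max_le (abs_sin_le_one α) (abs_cos_le_one α)
      have h2 : ‖(ε/2 : ℝ)‖ = ε/2 := by rw [Real.norm_eq_abs, abs_of_pos (by linarith)]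
      calc ‖(ε/2 : ℝ)‖ * ‖((-Real.sin α, Real.cos α) : ℝ × ℝ)‖ ≤ ε/2 * 1 := by
            rw [h2]; exact mul_le_mul_of_nonneg_left h1 (by linarith)
        _ < ε := by linarith
    · show 0 < cross a ((ε / 2) • (-Real.sin α, Real.cos α))
      simp only [cross, Prod.smul_fst, Prod.smul_snd, smul_eq_mul, hrepra.1, hrepra.2]
      have : ρa * Real.cos α * (ε / 2 * Real.cos α) - ρa * Real.sin α * (ε / 2 * -Real.sin α)
          = ρa * (ε/2) * (Real.cos α ^ 2 + Real.sin α ^ 2) := by ring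
      rw [this, Real.cos_sq_add_sin_sq]
      have : 0 < ρa * (ε/2) := by positivity
      linarith
  have hUsubΩ : U ⊆ Ω := fun v hv => hball hv.1
  set c₀ : ℝ := (volume U).toReal with hc₀
  have hUfin : volume U ≠ ⊤ := ((measure_mono hUsubΩ).trans_lt hΩfin).ne
  have hc₀pos : 0 < c₀ :=
    ENNReal.toReal_pos (hUopen.measure_pos volume hUne).ne' hUfin
  -- the derivative of the swept cross product
  set κ : ℝ := a.1 * s' - a.2 * c' with hκ
  have hφ : HasDerivAt (fun h : ℝ => cross a (P (θ₀ + h))) κ 0 := by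
    have := (hs1.const_mul a.1).sub (hc1.const_mul a.2)
    exact this
  have hcaa : cross a a = 0 := by simp [cross]; ring
  have hslope : Tendsto (fun h : ℝ => cross a (P (θ₀ + h)) / h)
      (nhdsWithin 0 (Ioi 0)) (nhds κ) := by
    have h1 := (hasDerivAt_iff_tendsto_slope.1 hφ).mono_left
      (nhdsWithin_mono (0:ℝ) (fun x hx => Set.mem_compl_singleton_iff.2 (ne_of_gt hx)))
    refine h1.congr' ?_
    filter_upwards [self_mem_nhdsWithin] with h hh
    simp only [slope_def_field]
    rw [show θ₀ + 0 = θ₀ by ring]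
    rw [show cross a (P θ₀) = 0 from hcaa]
    rw [sub_zero, sub_zero]
  rw [hsec] at hsect0
  have hkey : ∀ᶠ h in nhdsWithin (0:ℝ) (Ioi 0),
      cross a (P (θ₀ + h)) ≤ h ∧ h * f (P (θ₀ + h)) ≤ f a * cross a (P (θ₀ + h)) := by
    have ev1 : ∀ᶠ h in nhdsWithin (0:ℝ) (Ioi 0), θ₀ + h < 2 * S := by
      filter_upwards [Ioo_mem_nhdsGT_of_mem
        (Set.mem_Ico.2 ⟨le_refl (0:ℝ), (by linarith : (0:ℝ) < 2 * S - θ₀)⟩)] with h hh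
      simp only [mem_Ioo] at hh
      linarith [hh.2]
    have ev2 : ∀ᶠ h in nhdsWithin (0:ℝ) (Ioi 0), 0 < f (P (θ₀ + h)) := by
      have ht : Tendsto (fun h : ℝ => f (P (θ₀ + h))) (nhds 0) (nhds (f a)) := by
        have h1 : ContinuousAt (fun h : ℝ => f (P (θ₀ + h))) 0 :=
          f.continuous.continuousAt.comp hPcont
        have h2 := h1.tendsto
        rw [show θ₀ + 0 = θ₀ by ring] at h2
        exact h2
      exact (ht.mono_left nhdsWithin_le_nhds).eventually (eventually_gt_nhds hfa)
    have ev3 : ∀ᶠ h in nhdsWithin (0:ℝ) (Ioi 0), h ∈ Ioo (0:ℝ) (2 * c₀) :=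
      Ioo_mem_nhdsGT_of_mem (Set.mem_Ico.2 ⟨le_refl (0:ℝ), by linarith⟩)
    filter_upwards [ev1, ev2, ev3] with h h2S' hfb hh
    simp only [mem_Ioo] at hh
    obtain ⟨hh0, hhc₀⟩ := hh
    obtain ⟨hbF, hsectb⟩ := hP.2 (θ₀ + h) ⟨by linarith, h2S'⟩
    set b : ℝ × ℝ := P (θ₀ + h) with hbdef
    rw [hsec] at hsectb
    have hb0 : b ≠ 0 := hfr_ne b hbF
    have hbΩ : b ∈ Ω := hfrsub hbF
    have hfb' : (0:ℝ) < f b := hfb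
    set β : ℝ := polarAngle b with hβdef
    have hβico : β ∈ Ico 0 (2 * π) := polarAngle_mem b
    have hαβ : α < β := by
      by_contra hcon
      push_neg at hcon
      have := ENNReal.toReal_mono (hfin α) (measure_mono (hsub β α hcon))
      rw [hsectb, hsect0] at this
      linarith
    have hfinA : volume (Sset β \ Sset α) ≠ ⊤ :=
      ((measure_mono diff_subset).trans_lt (lt_top_iff_ne_top.2 (hfin β))).ne
    have hAmeas : (volume (Sset β \ Sset α)).toReal = h / 2 := by
      have hd : volume (Sset β \ Sset α) = volume (Sset β) - volume (Sset α) :=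
        measure_diff (hsub α β hαβ.le) (hmeas α).nullMeasurableSet (hfin α)
      rw [hd, ENNReal.toReal_sub_of_le (measure_mono (hsub α β hαβ.le)) (hfin β),
        hsectb, hsect0]
      ring
    have hβα : β - α < π := by
      by_contra hcon
      push_neg at hcon
      have hαπ : α ≤ π := by linarith [hβico.2]
      have hUsub : U ⊆ Sset β \ Sset α := by
        intro v hv
        have hvΩ : v ∈ Ω := hball hv.1
        have hhp := polar_halfplane ha0 hαπ hv.2
        refine ⟨⟨hvΩ, by linarith [hhp.2]⟩, fun hvS => absurd hvS.2 (not_le.2 hhp.1)⟩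
      have := ENNReal.toReal_mono hfinA (measure_mono hUsub)
      rw [hAmeas] at this
      have hle : c₀ ≤ h / 2 := this
      linarith
    obtain ⟨ρb, hρb, hreprb⟩ := polar_repr b hb0
    have hcab : 0 < cross a b := by
      rw [cross_eq hrepra hreprb]
      have hsin : 0 < Real.sin (β - α) := Real.sin_pos_of_pos_of_lt_pi (by linarith) hβα
      positivity
    -- lower bound
    set N : Set (ℝ × ℝ) := {v : ℝ × ℝ | Real.sin α * v.1 + (-Real.cos α) * v.2 = 0} with hN
    have hNnull : volume N = 0 := by
      have hne : ((Real.sin α, -Real.cos α) : ℝ × ℝ) ≠ 0 := by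
        intro hcz
        rw [Prod.ext_iff] at hcz
        simp only [Prod.fst_zero, Prod.snd_zero, neg_eq_zero] at hcz
        nlinarith [Real.sin_sq_add_cos_sq α, hcz.1, hcz.2]
      exact null_line (Real.sin α, -Real.cos α) hne 0
    have hTsub : (lmap a b '' T0 : Set (ℝ × ℝ)) ⊆ (Sset β \ Sset α) ∪ N := by
      intro x hx
      obtain ⟨s, t, hsn, htn, hst, hxeq⟩ := img_elem hx
      have hxΩ : x ∈ Ω := hxeq ▸ combo_mem hconv h0Ω haΩ hbΩ hsn htn hst
      by_cases hx0 : x = 0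
      · right
        rw [hx0]
        show Real.sin α * (0:ℝ) + (-Real.cos α) * (0:ℝ) = 0
        ring
      · have hcax : 0 ≤ cross a x := by
          have : cross a x = t * cross a b := by
            rw [hxeq]; simp only [cross]; ring
          rw [this]
          exact mul_nonneg htn hcab.le
        have hcxb : 0 ≤ cross x b := by
          have : cross x b = s * cross a b := by
            rw [hxeq]; simp only [cross]; ring
          rw [this]
          exact mul_nonneg hsn hcab.le
        have hbet := polar_between ha0 hb0 hx0 hαβ hβα hcax hcxb
        rcases eq_or_lt_of_le hbet.1 with heq | hlt
        · right
          obtain ⟨ρx, hρx, hreprx⟩ := polar_repr x hx0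
          show Real.sin α * x.1 + (-Real.cos α) * x.2 = 0
          rw [hreprx.1, hreprx.2, ← heq]
          ring
        · left
          exact ⟨⟨hxΩ, hbet.2⟩, fun hvS => absurd hvS.2 (not_le.2 hlt)⟩
    have hlow : cross a b / 2 ≤ h / 2 := by
      have h1 : volume (lmap a b '' T0) ≤ volume (Sset β \ Sset α) := by
        refine (measure_mono hTsub).trans ?_
        refine le_trans (measure_union_le _ _) ?_
        rw [hNnull, add_zero]
      have h3 := ENNReal.toReal_mono hfinA h1
      rw [volume_img a b hcab.le, ENNReal.toReal_ofReal (by positivity)] at h3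
      rw [← hAmeas]
      exact h3
    -- upper bound
    set p : ℝ × ℝ := (f a / f b) • b with hp
    have hfp : f p = f a := by
      rw [hp, _root_.map_smul, smul_eq_mul]
      field_simp
    have hcapeq : cross a p = (f a / f b) * cross a b := by
      simp only [cross, hp, Prod.smul_fst, Prod.smul_snd, smul_eq_mul]
      ring
    have hcap : 0 < cross a p := by
      rw [hcapeq]
      exact mul_pos (div_pos hfa hfb') hcab
    have hAsub : Sset β \ Sset α ⊆ lmap a p '' T0 := by
      intro v hv
      obtain ⟨⟨hvΩ, hvβ⟩, hvnot⟩ := hv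
      have hvα : α < polarAngle v := by
        by_contra hcon
        push_neg at hcon
        exact hvnot ⟨hvΩ, hcon⟩
      have hv0 : v ≠ 0 := by
        intro h'
        rw [h', polarAngle_zero] at hvα
        linarith [hαico.1]
      have hcav : 0 ≤ cross a v :=
        cross_nonneg_left ha0 hv0 hvα.le (by linarith [hvβ])
      have hcvb : 0 ≤ cross v b :=
        cross_nonneg_left hv0 hb0 hvβ (by linarith [hvα])
      have hcvp : 0 ≤ cross v p := by
        have : cross v p = (f a / f b) * cross v b := by
          simp only [cross, hp, Prod.smul_fst, Prod.smul_snd, smul_eq_mul]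
          ring
        rw [this]
        exact mul_nonneg (div_pos hfa hfb').le hcvb
      have hvid : (cross a p) • v = (cross v p) • a + (cross a v) • p := by
        ext <;> simp only [Prod.smul_fst, Prod.smul_snd, Prod.fst_add, Prod.snd_add,
          smul_eq_mul, cross] <;> ring
      have hlin : cross a p * f v = (cross v p + cross a v) * f a := by
        have := congrArg f hvid
        rw [_root_.map_smul, map_add, _root_.map_smul, _root_.map_smul, smul_eq_mul, smul_eq_mul, smul_eq_mul,
          hfp] at this
        linarith [this]
      have hfv : f v ≤ f a := hfle v hvΩ
      have hsum : cross a v + cross v p ≤ cross a p := by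
        have h1 : cross a p * f v ≤ cross a p * f a :=
          mul_le_mul_of_nonneg_left hfv hcap.le
        rw [hlin] at h1
        have := le_of_mul_le_mul_right h1 hfa
        linarith
      exact mem_img hcap hcav hcvp hsum
    have hup : h / 2 ≤ (f a / f b) * cross a b / 2 := by
      have hfinI : volume (lmap a p '' T0) ≠ ⊤ := by
        rw [volume_img a p hcap.le]
        exact ENNReal.ofReal_ne_top
      have h1 := ENNReal.toReal_mono hfinI (measure_mono hAsub)
      rw [volume_img a p hcap.le, ENNReal.toReal_ofReal (by positivity), hAmeas, hcapeq] at h1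
      exact h1
    constructor
    · linarith
    · show h * f b ≤ f a * cross a b
      have h2 : h ≤ (f a / f b) * cross a b := by linarith
      have h3 : (f a / f b) * cross a b = f a * cross a b / f b := by ring
      rw [h3] at h2
      exact (le_div_iff₀ hfb').1 h2
  -- pass to the limit
  have hκ1 : κ = 1 := by
    have hle : κ ≤ 1 := by
      refine le_of_tendsto hslope ?_
      filter_upwards [hkey, self_mem_nhdsWithin] with h hk hh0
      rw [div_le_one (show (0:ℝ) < h from hh0)]
      exact hk.1
    have hge : 1 ≤ κ := by
      have htq : Tendsto (fun h : ℝ => f (P (θ₀ + h)) / f a) (nhdsWithin 0 (Ioi 0)) (nhds 1) := by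
        have ht : Tendsto (fun h : ℝ => f (P (θ₀ + h))) (nhds 0) (nhds (f a)) := by
          have h1 : ContinuousAt (fun h : ℝ => f (P (θ₀ + h))) 0 :=
            f.continuous.continuousAt.comp hPcont
          have h2 := h1.tendsto
          rw [show θ₀ + 0 = θ₀ by ring] at h2
          exact h2
        have h3 : Tendsto (fun h : ℝ => f (P (θ₀ + h))) (nhdsWithin 0 (Ioi 0)) (nhds (f a)) :=
          ht.mono_left nhdsWithin_le_nhds
        have h4 := h3.div_const (f a)
        rw [div_self hfa.ne'] at h4
        exact h4
      refine le_of_tendsto_of_tendsto htq hslope ?_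
      filter_upwards [hkey, self_mem_nhdsWithin] with h hk hh0
      have hh0' : (0:ℝ) < h := hh0
      rw [div_le_div_iff₀ hfa hh0']
      linarith [hk.2]
    linarith
  rw [Matrix.det_fin_two_of, hPθ]
  show a.1 * (r * s') - r * c' * a.2 = r
  have h1 : a.1 * s' - a.2 * c' = 1 := hκ1
  linear_combination r * h1
end

section
/- For 1 < p < ∞, the generalized angle of the unit Lp-ball Ω at parameter φ ∈ [0, π/4] is θ(φ) = (1/p)·4^{−1/p}·B(sin² 2φ; 1/p, 1/2), where B(x; a, b) = ∫₀ˣ t^{a−1}(1−t)^{b−1} dt is the incomplete Euler beta function. -/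
open MeasureTheory Real Set

/-- The unit ball of the `Lᵖ` norm on `ℝ²`. -/
noncomputable def lpBall (p : ℝ) : Set (ℝ × ℝ) := {v | |v.1| ^ p + |v.2| ^ p ≤ 1}

/-- Parametrization of the boundary of the `Lᵖ` ball:
`u(φ) = |cos φ|^{2/p} sgn (cos φ)`. -/
noncomputable def uLp (p φ : ℝ) : ℝ := |Real.cos φ| ^ (2 / p) * Real.sign (Real.cos φ)

/-- `v(φ) = |sin φ|^{2/p} sgn (sin φ)`. -/
noncomputable def vLp (p φ : ℝ) : ℝ := |Real.sin φ| ^ (2 / p) * Real.sign (Real.sin φ)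

/-- The generalized angle `θ(φ)`: twice the area of the sector of the `Lᵖ` ball between
the positive `x`-axis and the boundary point `(u(φ), v(φ))`. -/
noncomputable def θLp (p φ : ℝ) : ℝ :=
  2 * sectorArea (lpBall p) (polarAngle (uLp p φ, vLp p φ))



section AuxLemmas

lemma aux_re (a b : ℝ) : ((a : ℂ) + (b : ℂ) * Complex.I).re = a := by simp

lemma aux_im (a b : ℝ) : ((a : ℂ) + (b : ℂ) * Complex.I).im = b := by simp

lemma polarAngle_le_iff {u v : ℝ} (hu : 0 < u) (hv : 0 ≤ v) (hvu : v ≤ u) (w : ℝ × ℝ) :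
    polarAngle w ≤ polarAngle (u, v) ↔ 0 ≤ w.1 ∧ 0 ≤ w.2 ∧ w.2 * u ≤ w.1 * v := by
  set zw : ℂ := (u : ℂ) + (v : ℂ) * Complex.I with hzw
  set z : ℂ := (w.1 : ℂ) + (w.2 : ℂ) * Complex.I with hz
  have hzwre : zw.re = u := aux_re u v
  have hzwim : zw.im = v := aux_im u v
  have hzre : z.re = w.1 := aux_re w.1 w.2
  have hzim : z.im = w.2 := aux_im w.1 w.2
  have hargw0 : 0 ≤ zw.arg := Complex.arg_nonneg_iff.2 (by rw [hzwim]; exact hv)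
  have hargwle : zw.arg ≤ Real.pi / 2 :=
    Complex.arg_le_pi_div_two_iff.2 (Or.inl (by rw [hzwre]; exact hu.le))
  have hPw : polarAngle (u, v) = zw.arg := by
    simp only [polarAngle]
    rw [if_pos hargw0]
  rw [hPw]
  rcases lt_or_ge w.2 0 with hy | hy
  · have hargz : z.arg < 0 := Complex.arg_neg_iff.2 (by rw [hzim]; exact hy)
    have hP : polarAngle w = z.arg + 2 * Real.pi := by
      simp only [polarAngle]
      rw [if_neg (not_le.2 hargz)]
    rw [hP]
    have h1 : -Real.pi < z.arg := Complex.neg_pi_lt_arg z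
    have hpi := Real.pi_pos
    constructor
    · intro h; exfalso; nlinarith [hargwle]
    · rintro ⟨-, h2, -⟩; exact absurd hy (not_lt.2 h2)
  · have hargz0 : 0 ≤ z.arg := Complex.arg_nonneg_iff.2 (by rw [hzim]; exact hy)
    have hP : polarAngle w = z.arg := by
      simp only [polarAngle]
      rw [if_pos hargz0]
    rw [hP]
    rcases lt_trichotomy w.1 0 with hx | hx | hx
    · have : ¬ z.arg ≤ Real.pi / 2 := by
        rw [Complex.arg_le_pi_div_two_iff]
        push_neg
        constructor
        · rw [hzre]; exact hx
        · rw [hzim]; exact hy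
      constructor
      · intro h; exact absurd (h.trans hargwle) this
      · rintro ⟨h1, -, -⟩; exact absurd hx (not_lt.2 h1)
    · rcases eq_or_lt_of_le hy with hy0 | hy0
      · have hz0 : z = 0 := by
          rw [hz, ← hy0, hx]; simp
        rw [hz0, Complex.arg_zero]
        simp [hx, ← hy0, hargw0]
      · have hargz : z.arg = Real.pi / 2 :=
          Complex.arg_eq_pi_div_two_iff.2 ⟨by rw [hzre, hx], by rw [hzim]; exact hy0⟩
        constructor
        · intro h
          have : zw.arg = Real.pi / 2 := le_antisymm hargwle (by rw [← hargz]; exact h)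
          have := Complex.arg_eq_pi_div_two_iff.1 this
          rw [hzwre] at this
          exact absurd this.1 hu.ne'
        · rintro ⟨-, -, h3⟩
          exfalso
          rw [hx] at h3
          nlinarith
    · -- w.1 > 0 : the main case
      have hzne : z ≠ 0 := by
        intro h0
        rw [h0] at hzre
        simp at hzre
        exact hx.ne hzre
      have hzwne : zw ≠ 0 := by
        intro h0
        rw [h0] at hzwre
        simp at hzwre
        exact hu.ne hzwre
      have hA : 0 < ‖z‖ := norm_pos_iff.2 hzne
      have hB : 0 < ‖zw‖ := norm_pos_iff.2 hzwne
      have hargz : z.arg = Real.arcsin (w.2 / ‖z‖) := by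
        rw [Complex.arg_of_re_nonneg (by rw [hzre]; exact hx.le), hzim]
      have hargw : zw.arg = Real.arcsin (v / ‖zw‖) := by
        rw [Complex.arg_of_re_nonneg (by rw [hzwre]; exact hu.le), hzwim]
      have hmem1 : w.2 / ‖z‖ ∈ Icc (-1 : ℝ) 1 := by
        constructor
        · have : (0:ℝ) ≤ w.2 / ‖z‖ := div_nonneg hy hA.le
          linarith
        · rw [div_le_one hA]
          calc w.2 = z.im := hzim.symm
          _ ≤ ‖z‖ := Complex.im_le_norm z
      have hmem2 : v / ‖zw‖ ∈ Icc (-1 : ℝ) 1 := by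
        constructor
        · have : (0:ℝ) ≤ v / ‖zw‖ := div_nonneg hv hB.le
          linarith
        · rw [div_le_one hB]
          calc v = zw.im := hzwim.symm
          _ ≤ ‖zw‖ := Complex.im_le_norm zw
      rw [hargz, hargw, Real.strictMonoOn_arcsin.le_iff_le hmem1 hmem2,
        div_le_div_iff₀ hA hB]
      have hA2 : ‖z‖ ^ 2 = w.1 ^ 2 + w.2 ^ 2 := by
        rw [Complex.sq_norm, Complex.normSq_apply, hzre, hzim]; ring
      have hB2 : ‖zw‖ ^ 2 = u ^ 2 + v ^ 2 := by
        rw [Complex.sq_norm, Complex.normSq_apply, hzwre, hzwim]; ring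
      constructor
      · intro h
        refine ⟨hx.le, hy, ?_⟩
        have h2 : (w.2 * ‖zw‖) ^ 2 ≤ (v * ‖z‖) ^ 2 :=
          pow_le_pow_left₀ (by positivity) h 2
        have h3 : (w.2 * u) ^ 2 ≤ (w.1 * v) ^ 2 := by nlinarith [h2, hA2, hB2]
        exact le_of_pow_le_pow_left₀ two_ne_zero (by positivity) h3
      · rintro ⟨-, -, h⟩
        have h2 : (w.2 * u) ^ 2 ≤ (w.1 * v) ^ 2 := pow_le_pow_left₀ (by positivity) h 2
        have h3 : (w.2 * ‖zw‖) ^ 2 ≤ (v * ‖z‖) ^ 2 := by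
          nlinarith [h2, hA2, hB2]
        exact le_of_pow_le_pow_left₀ two_ne_zero (by positivity) h3

lemma rpow_p_inv {z p : ℝ} (hz : 0 ≤ z) (hp0 : 0 < p) : (z ^ (1/p)) ^ p = z := by
  rw [← Real.rpow_mul hz, one_div, inv_mul_cancel₀ hp0.ne', Real.rpow_one]

lemma volume_sector_lp {p u v : ℝ} (hp : 1 < p) (hu0 : 0 < u) (hu1 : u ≤ 1) (hv : 0 ≤ v)
    (hvu : v ≤ u) (huv : u ^ p + v ^ p = 1) :
    volume {w : ℝ × ℝ | (|w.1| ^ p + |w.2| ^ p ≤ 1) ∧ 0 ≤ w.1 ∧ 0 ≤ w.2 ∧ w.2 * u ≤ w.1 * v}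
      = ENNReal.ofReal (u * v / 2 + ∫ x in u..1, (1 - x ^ p) ^ (1/p)) := by
  have hp0 : (0:ℝ) < p := lt_trans one_pos hp
  have hvp : v ^ p = 1 - u ^ p := by linarith
  have hup1 : u ^ p ≤ 1 := by nlinarith [Real.rpow_nonneg hv p]
  set S : Set (ℝ × ℝ) :=
    {w : ℝ × ℝ | (|w.1| ^ p + |w.2| ^ p ≤ 1) ∧ 0 ≤ w.1 ∧ 0 ≤ w.2 ∧ w.2 * u ≤ w.1 * v} with hSdef
  set g : ℝ → ℝ := fun x => min (x * v / u) ((1 - x ^ p) ^ (1/p)) with hgdef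
  have hgc : Continuous g := by
    apply Continuous.min
    · exact (continuous_id.mul continuous_const).div_const u
    · refine Continuous.rpow_const ?_ (fun x => Or.inr (by positivity))
      exact continuous_const.sub (continuous_id.rpow_const (fun x => Or.inr hp0.le))
  have hS : MeasurableSet S := by
    apply IsClosed.measurableSet
    have c1 : Continuous fun w : ℝ × ℝ => |w.1| ^ p + |w.2| ^ p :=
      (continuous_fst.abs.rpow_const fun _ => Or.inr hp0.le).add
        (continuous_snd.abs.rpow_const fun _ => Or.inr hp0.le)
    exact (isClosed_le c1 continuous_const).inter
      ((isClosed_le continuous_const continuous_fst).inter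
        ((isClosed_le continuous_const continuous_snd).inter
          (isClosed_le (continuous_snd.mul continuous_const)
            (continuous_fst.mul continuous_const))))
  have key : ∀ x : ℝ, volume (Prod.mk x ⁻¹' S)
      = (Icc (0:ℝ) 1).indicator (fun x => ENNReal.ofReal (g x)) x := by
    intro x
    by_cases hx : x ∈ Icc (0:ℝ) 1
    · have hxp1 : x ^ p ≤ 1 := Real.rpow_le_one hx.1 hx.2 hp0.le
      have h1xp : (0:ℝ) ≤ 1 - x ^ p := by linarith
      have h1 : Prod.mk x ⁻¹' S = Icc 0 (g x) := by
        ext y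
        simp only [hSdef, mem_preimage, mem_setOf_eq, mem_Icc]
        constructor
        · rintro ⟨hsum, -, hy0, hyu⟩
          rw [abs_of_nonneg hx.1, abs_of_nonneg hy0] at hsum
          refine ⟨hy0, le_min ((le_div_iff₀ hu0).2 hyu) ?_⟩
          have hyp : y ^ p ≤ 1 - x ^ p := by linarith
          have hyy : (y ^ p) ^ (1/p) = y := by
            rw [← Real.rpow_mul hy0, mul_one_div, div_self hp0.ne', Real.rpow_one]
          calc y = (y ^ p) ^ (1/p) := hyy.symm
            _ ≤ (1 - x ^ p) ^ (1/p) :=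
              Real.rpow_le_rpow (Real.rpow_nonneg hy0 p) hyp (by positivity)
        · rintro ⟨hy0, hymin⟩
          have hy2 : y ≤ (1 - x ^ p) ^ (1/p) := le_trans hymin (min_le_right _ _)
          refine ⟨?_, hx.1, hy0, (le_div_iff₀ hu0).1 (le_trans hymin (min_le_left _ _))⟩
          rw [abs_of_nonneg hx.1, abs_of_nonneg hy0]
          have : y ^ p ≤ ((1 - x ^ p) ^ (1/p)) ^ p := Real.rpow_le_rpow hy0 hy2 hp0.le
          rw [rpow_p_inv h1xp hp0] at this
          linarith
      rw [h1, indicator_of_mem hx, Real.volume_Icc, sub_zero]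
    · have h1 : Prod.mk x ⁻¹' S = ∅ := by
        ext y
        simp only [hSdef, mem_preimage, mem_setOf_eq, mem_empty_iff_false, iff_false, not_and]
        intro hsum hx0 hy0 _
        rw [mem_Icc, not_and_or, not_le, not_le] at hx
        rcases hx with hx | hx
        · exact absurd hx0 (not_le.2 hx)
        · have h1x : (1:ℝ) < x ^ p := by
            rw [Real.one_lt_rpow_iff_of_pos (by linarith)]
            exact Or.inl ⟨hx, hp0⟩
          rw [abs_of_nonneg hx0, abs_of_nonneg hy0] at hsum
          nlinarith [Real.rpow_nonneg hy0 p]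
      rw [h1, indicator_of_notMem hx]
      simp
  have hnn : 0 ≤ᵐ[volume.restrict (Icc (0:ℝ) 1)] g := by
    filter_upwards [ae_restrict_mem measurableSet_Icc] with x hx
    have hxp1 : x ^ p ≤ 1 := Real.rpow_le_one hx.1 hx.2 hp0.le
    exact le_min (div_nonneg (mul_nonneg hx.1 hv) hu0.le)
      (Real.rpow_nonneg (by linarith) _)
  have hv1 : volume S = ENNReal.ofReal (∫ x in Icc (0:ℝ) 1, g x) := by
    rw [Measure.volume_eq_prod, Measure.prod_apply hS]
    calc ∫⁻ x, volume (Prod.mk x ⁻¹' S)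
        = ∫⁻ x, (Icc (0:ℝ) 1).indicator (fun x => ENNReal.ofReal (g x)) x :=
          lintegral_congr key
      _ = ∫⁻ x in Icc (0:ℝ) 1, ENNReal.ofReal (g x) := lintegral_indicator measurableSet_Icc _
      _ = ENNReal.ofReal (∫ x in Icc (0:ℝ) 1, g x) :=
          (ofReal_integral_eq_lintegral_ofReal (hgc.integrableOn_Icc) hnn).symm
  rw [hv1]
  congr 1
  have hIcc : ∫ x in Icc (0:ℝ) 1, g x = ∫ x in (0:ℝ)..1, g x := by
    rw [intervalIntegral.integral_of_le zero_le_one, integral_Icc_eq_integral_Ioc]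
  have hsplit : ∫ x in (0:ℝ)..1, g x = (∫ x in (0:ℝ)..u, g x) + ∫ x in u..1, g x :=
    (intervalIntegral.integral_add_adjacent_intervals (hgc.intervalIntegrable _ _)
      (hgc.intervalIntegrable _ _)).symm
  have h1 : ∫ x in (0:ℝ)..u, g x = u * v / 2 := by
    have hcongr : ∀ x ∈ uIcc (0:ℝ) u, g x = x * (v / u) := by
      intro x hx
      rw [uIcc_of_le hu0.le] at hx
      have hx0 : 0 ≤ x := hx.1
      have hxu : x ≤ u := hx.2
      have hxp : x ^ p ≤ u ^ p := Real.rpow_le_rpow hx0 hxu hp0.le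
      have h1xp : (0:ℝ) ≤ 1 - x ^ p := by linarith
      have ha : (0:ℝ) ≤ x * v / u := div_nonneg (mul_nonneg hx0 hv) hu0.le
      have hb : (0:ℝ) ≤ (1 - x ^ p) ^ (1/p) := Real.rpow_nonneg h1xp _
      have e1 : (x * v / u) ^ p = x ^ p * v ^ p / u ^ p := by
        rw [Real.div_rpow (mul_nonneg hx0 hv) hu0.le, Real.mul_rpow hx0 hv]
      have e2 : x ^ p * v ^ p / u ^ p ≤ 1 - x ^ p := by
        rw [div_le_iff₀ (Real.rpow_pos_of_pos hu0 p)]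
        nlinarith [Real.rpow_nonneg hv p]
      have hle : x * v / u ≤ (1 - x ^ p) ^ (1/p) := by
        have := (Real.rpow_le_rpow_iff ha hb hp0).1
        apply this
        rw [rpow_p_inv h1xp hp0, e1]
        exact e2
      show min (x * v / u) ((1 - x ^ p) ^ (1/p)) = x * (v / u)
      rw [min_eq_left hle, mul_div_assoc]
    rw [intervalIntegral.integral_congr hcongr, intervalIntegral.integral_mul_const,
      integral_id]
    field_simp
    ring
  have h2 : ∫ x in u..1, g x = ∫ x in u..1, (1 - x ^ p) ^ (1/p) := by
    apply intervalIntegral.integral_congr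
    intro x hx
    rw [uIcc_of_le hu1] at hx
    have hx0 : 0 ≤ x := le_trans hu0.le hx.1
    have hxp : u ^ p ≤ x ^ p := Real.rpow_le_rpow hu0.le hx.1 hp0.le
    have hxp1 : x ^ p ≤ 1 := Real.rpow_le_one hx0 hx.2 hp0.le
    have h1xp : (0:ℝ) ≤ 1 - x ^ p := by linarith
    have ha : (0:ℝ) ≤ x * v / u := div_nonneg (mul_nonneg hx0 hv) hu0.le
    have hb : (0:ℝ) ≤ (1 - x ^ p) ^ (1/p) := Real.rpow_nonneg h1xp _
    have hle : (1 - x ^ p) ^ (1/p) ≤ x * v / u := by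
      apply (Real.rpow_le_rpow_iff hb ha hp0).1
      rw [rpow_p_inv h1xp hp0]
      have e1 : (x * v / u) ^ p = x ^ p * v ^ p / u ^ p := by
        rw [Real.div_rpow (mul_nonneg hx0 hv) hu0.le, Real.mul_rpow hx0 hv]
      rw [e1, le_div_iff₀ (Real.rpow_pos_of_pos hu0 p)]
      nlinarith [Real.rpow_nonneg hv p, Real.rpow_nonneg hu0.le p]
    exact min_eq_right hle
  rw [hIcc, hsplit, h1, h2]

lemma integrable_one_sub_rpow {p : ℝ} (hp : 1 < p) {u : ℝ} (hu0 : 0 ≤ u) (hu1 : u ≤ 1)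
    {e : ℝ} (he : -1 < e) (he0 : e < 0) :
    IntervalIntegrable (fun x => (1 - x ^ p) ^ e) volume u 1 := by
  have hp0 : (0:ℝ) < p := lt_trans one_pos hp
  rw [intervalIntegrable_iff_integrableOn_Ioo_of_le hu1]
  have hdom : IntegrableOn (fun x => (1 - x) ^ e) (Ioo u 1) volume := by
    have h1 : IntervalIntegrable (fun x => (1 - x) ^ e) volume u 1 := by
      have h0 := (intervalIntegral.intervalIntegrable_rpow' (a := 1 - u) (b := 0) he).comp_sub_left 1
      simpa using h0
    exact (intervalIntegrable_iff_integrableOn_Ioo_of_le hu1).1 h1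
  apply hdom.mono'
  · apply ContinuousOn.aestronglyMeasurable _ measurableSet_Ioo
    apply ContinuousOn.rpow_const
    · exact continuousOn_const.sub (continuousOn_id.rpow_const fun x _ => Or.inr hp0.le)
    · intro x hx
      left
      have hx0 : 0 < x := lt_of_le_of_lt hu0 hx.1
      have : x ^ p < 1 := Real.rpow_lt_one hx0.le hx.2 hp0
      have : (0:ℝ) < 1 - x ^ p := by linarith
      exact this.ne'
  · filter_upwards [ae_restrict_mem measurableSet_Ioo] with x hx
    have hx0 : 0 < x := lt_of_le_of_lt hu0 hx.1
    have hxp : x ^ p ≤ x := by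
      have h := Real.rpow_le_rpow_of_exponent_ge hx0 hx.2.le (by linarith : (1:ℝ) ≤ p)
      rwa [Real.rpow_one] at h
    have h1 : (0:ℝ) < 1 - x := by linarith [hx.2]
    have h2 : 1 - x ≤ 1 - x ^ p := by linarith
    rw [Real.norm_eq_abs, abs_of_nonneg (Real.rpow_nonneg (by linarith) e)]
    exact Real.rpow_le_rpow_of_nonpos h1 h2 he0.le

lemma ftc_lp {p : ℝ} (hp : 1 < p) {u v : ℝ} (hu0 : 0 < u) (hu1 : u ≤ 1) (hv : 0 ≤ v)
    (hvp : v ^ p = 1 - u ^ p) :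
    ∫ x in u..1, (1 - x ^ p) ^ (1/p - 1)
      = u * v + 2 * ∫ x in u..1, (1 - x ^ p) ^ (1/p) := by
  have hp0 : (0:ℝ) < p := lt_trans one_pos hp
  have hp1 : (0:ℝ) < 1/p := by positivity
  have hp2 : 1/p < 1 := by rw [div_lt_one hp0]; exact hp
  set F : ℝ → ℝ := fun x => x * (1 - x ^ p) ^ (1/p) with hF
  set F' : ℝ → ℝ := fun x => 2 * (1 - x ^ p) ^ (1/p) - (1 - x ^ p) ^ (1/p - 1) with hF'
  have hcont1 : Continuous fun x : ℝ => (1 - x ^ p) ^ (1/p) := by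
    refine Continuous.rpow_const ?_ fun x => Or.inr hp1.le
    exact continuous_const.sub (continuous_id.rpow_const fun x => Or.inr hp0.le)
  have hcont : ContinuousOn F (Icc u 1) := (continuous_id.mul hcont1).continuousOn
  have hderiv : ∀ x ∈ Ioo u 1, HasDerivWithinAt F (F' x) (Ioi x) x := by
    intro x hx
    have hx0 : 0 < x := hu0.trans hx.1
    have hxp1 : x ^ p < 1 := Real.rpow_lt_one hx0.le hx.2 hp0
    have hA : (0:ℝ) < 1 - x ^ p := by linarith
    have d1 : HasDerivAt (fun y : ℝ => y ^ p) (p * x ^ (p - 1)) x :=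
      Real.hasDerivAt_rpow_const (Or.inl hx0.ne')
    have d2 : HasDerivAt (fun y : ℝ => 1 - y ^ p) (0 - p * x ^ (p - 1)) x :=
      (hasDerivAt_const x 1).sub d1
    have d3 : HasDerivAt (fun y : ℝ => (1 - y ^ p) ^ (1/p))
        ((1/p * (1 - x ^ p) ^ (1/p - 1)) * (0 - p * x ^ (p - 1))) x := by
      have douter : HasDerivAt (fun y : ℝ => y ^ (1/p))
          (1/p * (1 - x ^ p) ^ (1/p - 1)) (1 - x ^ p) :=
        Real.hasDerivAt_rpow_const (Or.inl hA.ne')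
      exact douter.comp x d2
    have d4 : HasDerivAt F (1 * (1 - x ^ p) ^ (1/p)
        + x * ((1/p * (1 - x ^ p) ^ (1/p - 1)) * (0 - p * x ^ (p - 1)))) x :=
      (hasDerivAt_id x).mul d3
    apply HasDerivAt.hasDerivWithinAt
    refine d4.congr_deriv (Eq.symm ?_)
    have hxx : x * x ^ (p - 1) = x ^ p := by
      have h := Real.rpow_add hx0 1 (p - 1)
      rw [Real.rpow_one] at h
      rw [show (1:ℝ) + (p - 1) = p by ring] at h
      exact h.symm
    have hAA : (1 - x ^ p) ^ (1/p : ℝ) = (1 - x ^ p) * (1 - x ^ p) ^ (1/p - 1) := by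
      have h := Real.rpow_add hA 1 (1/p - 1)
      rw [Real.rpow_one] at h
      rw [show (1:ℝ) + (1/p - 1) = 1/p by ring] at h
      exact h
    simp only [hF']
    have hpp : p * p⁻¹ = 1 := mul_inv_cancel₀ hp0.ne'
    linear_combination hAA + (1 - x ^ p) ^ (1/p - 1) * hxx
      + ((1 - x ^ p) ^ (1/p - 1) * x * x ^ (p - 1)) * hpp
  have hint2 : IntervalIntegrable (fun x => (1 - x ^ p) ^ (1/p - 1)) volume u 1 :=
    integrable_one_sub_rpow hp hu0.le hu1 (by linarith) (by linarith)
  have hint1 : IntervalIntegrable (fun x => (1 - x ^ p) ^ (1/p)) volume u 1 :=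
    hcont1.intervalIntegrable _ _
  have f'int : IntervalIntegrable F' volume u 1 :=
    ((hint1.const_mul 2)).sub hint2
  have hFTC := intervalIntegral.integral_eq_sub_of_hasDeriv_right_of_le hu1 hcont hderiv f'int
  have hF1 : F 1 = 0 := by
    simp only [hF]
    rw [Real.one_rpow, sub_self, Real.zero_rpow (by positivity : (1:ℝ)/p ≠ 0), mul_zero]
  have hFu : F u = u * v := by
    simp only [hF]
    rw [← hvp, ← Real.rpow_mul hv, mul_one_div, div_self hp0.ne', Real.rpow_one]
  rw [hF1, hFu, zero_sub] at hFTC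
  have hsplit : ∫ x in u..1, F' x
      = 2 * (∫ x in u..1, (1 - x ^ p) ^ (1/p)) - ∫ x in u..1, (1 - x ^ p) ^ (1/p - 1) := by
    rw [hF']
    rw [intervalIntegral.integral_sub (hint1.const_mul 2) hint2,
      intervalIntegral.integral_const_mul]
  rw [hsplit] at hFTC
  linarith

lemma beta_integrable {p : ℝ} (hp : 1 < p) :
    IntegrableOn (fun t : ℝ => t ^ (1/p - 1) * (1 - t) ^ ((1:ℝ)/2 - 1)) (Icc (0:ℝ) 1) := by
  have hp0 : (0:ℝ) < p := lt_trans one_pos hp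
  have hep : (-1:ℝ) < 1/p - 1 := by
    have : (0:ℝ) < 1/p := by positivity
    linarith
  have hep0 : 1/p - 1 ≤ 0 := by
    have : 1/p ≤ 1 := by rw [div_le_one hp0]; exact hp.le
    linarith
  rw [integrableOn_Icc_iff_integrableOn_Ioo]
  have hsub : Ioo (0:ℝ) 1 ⊆ Ioc 0 (1/2) ∪ Ioo (1/2) 1 := by
    intro t ht
    rcases le_or_gt t (1/2) with h | h
    · exact Or.inl ⟨ht.1, h⟩
    · exact Or.inr ⟨h, ht.2⟩
  have I1 : IntegrableOn (fun t : ℝ => t ^ (1/p - 1) * (1 - t) ^ ((1:ℝ)/2 - 1))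
      (Ioc (0:ℝ) (1/2)) := by
    have hdom : IntegrableOn (fun t : ℝ => t ^ (1/p - 1) * (1/2:ℝ) ^ ((1:ℝ)/2 - 1))
        (Ioc (0:ℝ) (1/2)) := by
      have h1 : IntervalIntegrable (fun t : ℝ => t ^ (1/p - 1) * (1/2:ℝ) ^ ((1:ℝ)/2 - 1))
          volume 0 (1/2) :=
        (intervalIntegral.intervalIntegrable_rpow' hep).mul_const _
      exact (intervalIntegrable_iff_integrableOn_Ioc_of_le (by norm_num)).1 h1
    apply hdom.mono'
    · apply ContinuousOn.aestronglyMeasurable _ measurableSet_Ioc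
      apply ContinuousOn.mul
      · exact continuousOn_id.rpow_const fun t ht => Or.inl ht.1.ne'
      · refine (continuousOn_const.sub continuousOn_id).rpow_const fun t ht => Or.inl ?_
        have : t < 1 := lt_of_le_of_lt ht.2 (by norm_num)
        have : (0:ℝ) < 1 - t := by linarith
        exact this.ne'
    · filter_upwards [ae_restrict_mem measurableSet_Ioc] with t ht
      have h1t : (0:ℝ) < 1 - t := by
        have : t < 1 := lt_of_le_of_lt ht.2 (by norm_num)
        linarith
      rw [Real.norm_eq_abs, abs_of_nonneg
        (mul_nonneg (Real.rpow_nonneg ht.1.le _) (Real.rpow_nonneg h1t.le _))]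
      apply mul_le_mul_of_nonneg_left _ (Real.rpow_nonneg ht.1.le _)
      exact Real.rpow_le_rpow_of_nonpos (by norm_num) (by linarith [ht.2]) (by norm_num)
  have I2 : IntegrableOn (fun t : ℝ => t ^ (1/p - 1) * (1 - t) ^ ((1:ℝ)/2 - 1))
      (Ioo (1/2:ℝ) 1) := by
    have hdom : IntegrableOn (fun t : ℝ => (1/2:ℝ) ^ (1/p - 1) * (1 - t) ^ ((1:ℝ)/2 - 1))
        (Ioo (1/2:ℝ) 1) := by
      have h0 := (intervalIntegral.intervalIntegrable_rpow'
        (show (-1:ℝ) < (1:ℝ)/2 - 1 by norm_num) (a := (1:ℝ)/2) (b := 0)).comp_sub_left 1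
      have h1 : IntervalIntegrable (fun t : ℝ => (1 - t) ^ ((1:ℝ)/2 - 1)) volume (1/2) 1 := by
        rw [show (1:ℝ) - 1/2 = 1/2 by norm_num, show (1:ℝ) - 0 = 1 by norm_num] at h0
        exact h0
      exact (intervalIntegrable_iff_integrableOn_Ioo_of_le (by norm_num)).1
        (h1.const_mul _)
    apply hdom.mono'
    · apply ContinuousOn.aestronglyMeasurable _ measurableSet_Ioo
      apply ContinuousOn.mul
      · refine continuousOn_id.rpow_const fun t ht => Or.inl ?_
        have : (0:ℝ) < t := lt_trans (by norm_num) ht.1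
        exact this.ne'
      · refine (continuousOn_const.sub continuousOn_id).rpow_const fun t ht => Or.inl ?_
        have : (0:ℝ) < 1 - t := by linarith [ht.2]
        exact this.ne'
    · filter_upwards [ae_restrict_mem measurableSet_Ioo] with t ht
      have ht0 : (0:ℝ) < t := lt_trans (by norm_num) ht.1
      have h1t : (0:ℝ) < 1 - t := by linarith [ht.2]
      rw [Real.norm_eq_abs, abs_of_nonneg
        (mul_nonneg (Real.rpow_nonneg ht0.le _) (Real.rpow_nonneg h1t.le _))]
      apply mul_le_mul_of_nonneg_right _ (Real.rpow_nonneg h1t.le _)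
      exact Real.rpow_le_rpow_of_nonpos (by norm_num) ht.1.le hep0
  exact (I1.union I2).mono_set hsub

lemma subst_lp {p u : ℝ} (hp : 1 < p) (hu0 : 0 < u) (hu1 : u ≤ 1) (hup : 1/2 ≤ u ^ p) :
    ∫ t in (0:ℝ)..(4 * u ^ p * (1 - u ^ p)), t ^ (1/p - 1) * (1 - t) ^ ((1:ℝ)/2 - 1)
      = p * (4:ℝ) ^ (1/p : ℝ) * ∫ x in u..1, (1 - x ^ p) ^ (1/p - 1) := by
  have hp0 : (0:ℝ) < p := lt_trans one_pos hp
  set g : ℝ → ℝ := fun t => t ^ (1/p - 1) * (1 - t) ^ ((1:ℝ)/2 - 1) with hg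
  set h : ℝ → ℝ := fun x => 4 * x ^ p * (1 - x ^ p) with hh
  set h' : ℝ → ℝ := fun x => 4 * p * x ^ (p - 1) * (1 - 2 * x ^ p) with hh'
  have hcont_xp : Continuous fun x : ℝ => x ^ p :=
    continuous_id.rpow_const fun _ => Or.inr hp0.le
  have hh_cont : Continuous h :=
    (continuous_const.mul hcont_xp).mul (continuous_const.sub hcont_xp)
  have himage : ∀ x ∈ Ioo u 1, h x ∈ Ioo (0:ℝ) 1 := by
    intro x hx
    have hx0 : 0 < x := hu0.trans hx.1
    have ha1 : (1:ℝ)/2 < x ^ p := lt_of_le_of_lt hup (Real.rpow_lt_rpow hu0.le hx.1 hp0)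
    have ha2 : x ^ p < 1 := Real.rpow_lt_one hx0.le hx.2 hp0
    simp only [hh]
    constructor
    · have : (0:ℝ) < x ^ p := by linarith
      have : (0:ℝ) < 1 - x ^ p := by linarith
      positivity
    · nlinarith [mul_pos (show (0:ℝ) < 2 * x ^ p - 1 by linarith)
        (show (0:ℝ) < 2 * x ^ p - 1 by linarith)]
  have key_eq : ∀ x ∈ Ioo u 1, h' x • g (h x)
      = -(p * (4:ℝ) ^ (1/p : ℝ)) * (1 - x ^ p) ^ (1/p - 1) := by
    intro x hx
    have hx0 : 0 < x := hu0.trans hx.1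
    have ha1 : (1:ℝ)/2 < x ^ p := lt_of_le_of_lt hup (Real.rpow_lt_rpow hu0.le hx.1 hp0)
    have ha2 : x ^ p < 1 := Real.rpow_lt_one hx0.le hx.2 hp0
    have ha0 : (0:ℝ) < x ^ p := by linarith
    have hA : (0:ℝ) < 1 - x ^ p := by linarith
    have hb : (0:ℝ) < 2 * x ^ p - 1 := by linarith
    have e1 : (1:ℝ) - 4 * x ^ p * (1 - x ^ p) = (2 * x ^ p - 1) ^ 2 := by ring
    have e2 : ((2 * x ^ p - 1) ^ 2 : ℝ) ^ ((1:ℝ)/2 - 1) = (2 * x ^ p - 1)⁻¹ := by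
      rw [show ((1:ℝ)/2 - 1) = -(1/2) by norm_num, ← Real.rpow_natCast (2 * x ^ p - 1) 2,
        ← Real.rpow_mul hb.le]
      norm_num [Real.rpow_neg_one]
    have e3 : (4 * x ^ p * (1 - x ^ p)) ^ (1/p - 1)
        = (4:ℝ) ^ (1/p - 1) * (x ^ p) ^ (1/p - 1) * (1 - x ^ p) ^ (1/p - 1) := by
      rw [Real.mul_rpow (by positivity) hA.le, Real.mul_rpow (by norm_num) ha0.le]
    have e4 : (x ^ p : ℝ) ^ (1/p - 1) = x ^ (1 - p) := by
      rw [← Real.rpow_mul hx0.le]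
      congr 1
      rw [mul_sub, mul_one_div, div_self hp0.ne', mul_one]
    have e5 : x ^ (p - 1) * x ^ (1 - p) = 1 := by
      rw [← Real.rpow_add hx0]
      norm_num
    have e6 : (4:ℝ) ^ (1/p - 1 : ℝ) * 4 = (4:ℝ) ^ (1/p : ℝ) := by
      have h := (Real.rpow_add (show (0:ℝ) < 4 by norm_num) (1/p - 1) 1).symm
      rw [Real.rpow_one] at h
      rw [show (1/p - 1 + 1 : ℝ) = 1/p by ring] at h
      exact h
    have e7 : (2 * x ^ p - 1) * (2 * x ^ p - 1)⁻¹ = 1 := mul_inv_cancel₀ hb.ne'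
    show h' x * g (h x) = -(p * (4:ℝ) ^ (1/p : ℝ)) * (1 - x ^ p) ^ (1/p - 1)
    simp only [hg, hh, hh']
    rw [e1, e2, e3, e4]
    calc 4 * p * x ^ (p - 1) * (1 - 2 * x ^ p)
          * ((4:ℝ) ^ (1/p - 1) * x ^ (1 - p) * (1 - x ^ p) ^ (1/p - 1) * (2 * x ^ p - 1)⁻¹)
        = -(((4:ℝ) ^ (1/p - 1 : ℝ) * 4) * p * (x ^ (p - 1) * x ^ (1 - p))
            * (1 - x ^ p) ^ (1/p - 1) * ((2 * x ^ p - 1) * (2 * x ^ p - 1)⁻¹)) := by ring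
      _ = -(p * (4:ℝ) ^ (1/p : ℝ)) * (1 - x ^ p) ^ (1/p - 1) := by
          rw [e5, e6, e7]; ring
  have hf : ContinuousOn h (Set.uIcc (1:ℝ) u) := hh_cont.continuousOn
  have hmm : min (1:ℝ) u = u := min_eq_right hu1
  have hmx : max (1:ℝ) u = 1 := max_eq_left hu1
  have hff' : ∀ x ∈ Ioo (min (1:ℝ) u) (max (1:ℝ) u), HasDerivWithinAt h (h' x) (Ioi x) x := by
    intro x hx
    rw [hmm, hmx] at hx
    have hx0 : 0 < x := hu0.trans hx.1
    have d1 : HasDerivAt (fun y : ℝ => y ^ p) (p * x ^ (p - 1)) x :=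
      Real.hasDerivAt_rpow_const (Or.inl hx0.ne')
    have dh : HasDerivAt h (4 * (p * x ^ (p - 1)) * (1 - x ^ p)
        + 4 * x ^ p * (0 - p * x ^ (p - 1))) x :=
      (d1.const_mul 4).mul ((hasDerivAt_const x 1).sub d1)
    apply HasDerivAt.hasDerivWithinAt
    refine dh.congr_deriv (Eq.symm ?_)
    simp only [hh']
    ring
  have hgIoo : ContinuousOn g (Ioo (0:ℝ) 1) := by
    apply ContinuousOn.mul
    · exact continuousOn_id.rpow_const fun t ht => Or.inl ht.1.ne'
    · refine (continuousOn_const.sub continuousOn_id).rpow_const fun t ht => Or.inl ?_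
      have : (0:ℝ) < 1 - t := by linarith [ht.2]
      exact this.ne'
  have hg_cont : ContinuousOn g (h '' Ioo (min (1:ℝ) u) (max (1:ℝ) u)) := by
    apply hgIoo.mono
    rw [hmm, hmx]
    rintro t ⟨x, hx, rfl⟩
    exact himage x hx
  have hIccImg : h '' (Set.uIcc (1:ℝ) u) ⊆ Icc (0:ℝ) 1 := by
    rintro t ⟨x, hx, rfl⟩
    rw [Set.uIcc_comm, Set.uIcc_of_le hu1] at hx
    have hx0 : 0 < x := lt_of_lt_of_le hu0 hx.1
    simp only [hh]
    have ha2 : x ^ p ≤ 1 := Real.rpow_le_one hx0.le hx.2 hp0.le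
    have ha0 : (0:ℝ) ≤ x ^ p := Real.rpow_nonneg hx0.le p
    constructor
    · have : (0:ℝ) ≤ 1 - x ^ p := by linarith
      positivity
    · nlinarith [sq_nonneg (2 * x ^ p - 1)]
  have hg1 : IntegrableOn g (h '' (Set.uIcc (1:ℝ) u)) := (beta_integrable hp).mono_set hIccImg
  have hg2 : IntegrableOn (fun x => h' x • g (h x)) (Set.uIcc (1:ℝ) u) := by
    rw [Set.uIcc_comm, Set.uIcc_of_le hu1, integrableOn_Icc_iff_integrableOn_Ioo]
    have hbase : IntegrableOn (fun x => -(p * (4:ℝ) ^ (1/p : ℝ)) * (1 - x ^ p) ^ (1/p - 1))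
        (Ioo u 1) := by
      have hq1 : (0:ℝ) < 1/p := by positivity
      have hq2 : 1/p < 1 := by rw [div_lt_one hp0]; exact hp
      have hint : IntervalIntegrable (fun x => (1 - x ^ p) ^ (1/p - 1)) volume u 1 :=
        integrable_one_sub_rpow hp hu0.le hu1 (by linarith) (by linarith)
      exact ((intervalIntegrable_iff_integrableOn_Ioo_of_le hu1).1 hint).const_mul _
    apply hbase.congr
    filter_upwards [ae_restrict_mem measurableSet_Ioo] with x hx
    exact (key_eq x hx).symm
  have hmain := intervalIntegral.integral_comp_smul_deriv''' hf hff' hg_cont hg1 hg2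
  have hh1 : h 1 = 0 := by simp [hh, Real.one_rpow]
  have hhu : h u = 4 * u ^ p * (1 - u ^ p) := rfl
  simp only [Function.comp] at hmain
  rw [hh1, hhu] at hmain
  have hae : ∀ᵐ x ∂(volume : Measure ℝ), x ∈ Set.uIoc (1:ℝ) u → h' x • g (h x)
      = -(p * (4:ℝ) ^ (1/p : ℝ)) * (1 - x ^ p) ^ (1/p - 1) := by
    have h1 : (volume : Measure ℝ) {(1:ℝ)} = 0 := measure_singleton 1
    filter_upwards [measure_eq_zero_iff_ae_notMem.1 h1] with x hx1 hx
    rw [Set.uIoc_comm, Set.uIoc_of_le hu1] at hx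
    have hxIoo : x ∈ Ioo u 1 := ⟨hx.1, lt_of_le_of_ne hx.2 (by simpa using hx1)⟩
    exact key_eq x hxIoo
  have hLHS : ∫ x in (1:ℝ)..u, h' x • g (h x)
      = -(p * (4:ℝ) ^ (1/p : ℝ)) * ∫ x in (1:ℝ)..u, (1 - x ^ p) ^ (1/p - 1) := by
    rw [intervalIntegral.integral_congr_ae hae, intervalIntegral.integral_const_mul]
  rw [hLHS] at hmain
  rw [← hmain, intervalIntegral.integral_symm u 1]
  ring

end AuxLemmas

/-- For `φ ∈ [0, π/4]`, the generalized angle of the unit `Lᵖ`-ball is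
`θ(φ) = (1/p) 4^{−1/p} B(sin² 2φ; 1/p, 1/2)` where `B(x; a, b) = ∫₀ˣ t^{a−1}(1−t)^{b−1} dt`
is the incomplete Euler beta function. -/
theorem stmt12 (p : ℝ) (hp : 1 < p) :
    ∀ φ ∈ Set.Icc (0 : ℝ) (Real.pi / 4),
      θLp p φ = 1 / p * (4 : ℝ) ^ (-(1 / p)) *
        ∫ t in (0 : ℝ)..(Real.sin (2 * φ)) ^ 2,
          t ^ (1 / p - 1) * (1 - t) ^ ((1 : ℝ) / 2 - 1) := by
  intro φ hφ
  have hp0 : (0:ℝ) < p := lt_trans one_pos hp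
  have hφ0 : 0 ≤ φ := hφ.1
  have hφ4 : φ ≤ Real.pi / 4 := hφ.2
  have hπ := Real.pi_pos
  have hexp0 : (0:ℝ) ≤ 2/p := div_nonneg (by norm_num) hp0.le
  have hc : 0 < Real.cos φ := Real.cos_pos_of_mem_Ioo ⟨by linarith, by linarith⟩
  have hs : 0 ≤ Real.sin φ := Real.sin_nonneg_of_nonneg_of_le_pi hφ0 (by linarith)
  have hsc : Real.sin φ ≤ Real.cos φ := by
    rw [← Real.sin_pi_div_two_sub]
    exact Real.sin_le_sin_of_le_of_le_pi_div_two (by linarith) (by linarith) (by linarith)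
  set c := Real.cos φ with hcdef
  set s := Real.sin φ with hsdef
  set u := c ^ (2/p) with hudef
  set v := s ^ (2/p) with hvdef
  have hu0 : 0 < u := Real.rpow_pos_of_pos hc _
  have hu1 : u ≤ 1 := Real.rpow_le_one hc.le (Real.cos_le_one φ) hexp0
  have hv0 : 0 ≤ v := Real.rpow_nonneg hs _
  have hvu : v ≤ u := Real.rpow_le_rpow hs hsc hexp0
  have hupc : u ^ p = c ^ 2 := by
    rw [hudef, ← Real.rpow_mul hc.le, div_mul_cancel₀ _ hp0.ne', Real.rpow_two]
  have hvps : v ^ p = s ^ 2 := by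
    rw [hvdef, ← Real.rpow_mul hs, div_mul_cancel₀ _ hp0.ne', Real.rpow_two]
  have hpyth : s ^ 2 + c ^ 2 = 1 := Real.sin_sq_add_cos_sq φ
  have huv : u ^ p + v ^ p = 1 := by rw [hupc, hvps]; linarith
  have hvp : v ^ p = 1 - u ^ p := by linarith
  have hup2 : 1/2 ≤ u ^ p := by
    rw [hupc]
    have h1 : Real.cos (Real.pi/4) ≤ c :=
      Real.cos_le_cos_of_nonneg_of_le_pi hφ0 (by linarith) hφ4
    rw [Real.cos_pi_div_four] at h1
    nlinarith [Real.sq_sqrt (by norm_num : (0:ℝ) ≤ 2), Real.sqrt_nonneg 2]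
  have huLp : uLp p φ = u := by
    rw [uLp, abs_of_pos hc, Real.sign_of_pos hc, mul_one]
  have hvLp : vLp p φ = v := by
    rcases eq_or_lt_of_le hs with h0 | h0
    · rw [vLp, hvdef, ← h0]
      simp only [Real.zero_rpow (by positivity : (2:ℝ)/p ≠ 0)]
      rw [← h0] at hsdef
      rw [← hsdef, Real.sign_zero, mul_zero]
    · rw [vLp, abs_of_pos h0, Real.sign_of_pos h0, mul_one]
  have hsetEq : {w : ℝ × ℝ | w ∈ lpBall p ∧ polarAngle w ≤ polarAngle (u, v)}
      = {w : ℝ × ℝ | (|w.1| ^ p + |w.2| ^ p ≤ 1) ∧ 0 ≤ w.1 ∧ 0 ≤ w.2 ∧ w.2 * u ≤ w.1 * v} := by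
    ext w
    simp only [mem_setOf_eq, lpBall]
    rw [polarAngle_le_iff hu0 hv0 hvu w]
  have hInn : 0 ≤ ∫ x in u..1, (1 - x ^ p) ^ (1/p) := by
    apply intervalIntegral.integral_nonneg hu1
    intro x hx
    have hx0 : (0:ℝ) ≤ x := le_trans hu0.le hx.1
    have : x ^ p ≤ 1 := Real.rpow_le_one hx0 hx.2 hp0.le
    exact Real.rpow_nonneg (by linarith) _
  have harea : sectorArea (lpBall p) (polarAngle (u, v))
      = u * v / 2 + ∫ x in u..1, (1 - x ^ p) ^ (1/p) := by
    rw [sectorArea, hsetEq, volume_sector_lp hp hu0 hu1 hv0 hvu huv,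
      ENNReal.toReal_ofReal (by positivity)]
  have hsin2 : (Real.sin (2*φ)) ^ 2 = 4 * u ^ p * (1 - u ^ p) := by
    rw [Real.sin_two_mul, hupc, ← hsdef, ← hcdef]
    nlinarith [hpyth]
  have hθ : θLp p φ = u * v + 2 * ∫ x in u..1, (1 - x ^ p) ^ (1/p) := by
    rw [θLp, huLp, hvLp, harea]
    ring
  rw [hθ, hsin2, subst_lp hp hu0 hu1 hup2, ftc_lp hp hu0 hu1 hv0 hvp]
  have h4 : (4:ℝ) ^ (-(1/p) : ℝ) * (4:ℝ) ^ (1/p : ℝ) = 1 := by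
    rw [← Real.rpow_add (by norm_num : (0:ℝ) < 4)]
    norm_num
  have hppinv : 1/p * p = 1 := by field_simp
  set I1 := ∫ x in u..1, (1 - x ^ p) ^ (1/p) with hI1
  calc u * v + 2 * I1
      = (1/p * p) * ((4:ℝ) ^ (-(1/p) : ℝ) * (4:ℝ) ^ (1/p : ℝ)) * (u * v + 2 * I1) := by
        rw [h4, hppinv]; ring
    _ = 1 / p * (4:ℝ) ^ (-(1/p)) * (p * (4:ℝ) ^ (1/p : ℝ) * (u * v + 2 * I1)) := by ring
end

section
/- For 1 < p < ∞ and q defined by pq = p + q, let Ω be the unit Lp-ball in ℝ². Then the polar set Ω° is the unit Lq-ball, and the convex trigonometric functions satisfy cos_{Ω°}θ° = (cos φ)^{2/q} and sin_{Ω°}θ° = (sin φ)^{2/q} for φ ∈ [0, π/2], where θ ↔ θ° are corresponding angles and (cos_Ω θ, sin_Ω θ) = ((cos φ)^{2/p}, (sin φ)^{2/p}). In particular, the same parameter φ describes both corresponding boundary points. -/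
open MeasureTheory Real Set

lemma isConj_of (p q : ℝ) (hp : 1 < p) (hpq : p * q = p + q) : p.HolderConjugate q := by
  have hp0 : 0 < p := by linarith
  have hq0 : 0 < q := by nlinarith
  exact Real.holderConjugate_iff.mpr ⟨hp, by field_simp; linarith [hpq]⟩

lemma my_geom_lt {w1 w2 X Y : ℝ} (hw1 : 0 < w1) (hw2 : 0 < w2) (hw : w1 + w2 = 1)
    (hX : 0 ≤ X) (hY : 0 ≤ Y) (hne : X ≠ Y) : X ^ w1 * Y ^ w2 < w1 * X + w2 * Y := by
  rcases eq_or_lt_of_le hX with h0 | hX0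
  · have hY0 : 0 < Y := lt_of_le_of_ne hY (by rw [← h0] at hne; exact hne)
    rw [← h0, Real.zero_rpow hw1.ne', zero_mul]
    positivity
  rcases eq_or_lt_of_le hY with h0 | hY0
  · have : (0:ℝ) < X := hX0
    rw [← h0, Real.zero_rpow hw2.ne', mul_zero]
    positivity
  have hcon := strictConcaveOn_log_Ioi.2 (mem_Ioi.2 hX0) (mem_Ioi.2 hY0) hne hw1 hw2 hw
  simp only [smul_eq_mul] at hcon
  have hpos : 0 < w1 * X + w2 * Y := by positivity
  calc X ^ w1 * Y ^ w2
      = Real.exp (w1 * Real.log X + w2 * Real.log Y) := by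
        rw [Real.exp_add, Real.rpow_def_of_pos hX0, Real.rpow_def_of_pos hY0,
          mul_comm (Real.log X), mul_comm (Real.log Y)]
    _ < Real.exp (Real.log (w1 * X + w2 * Y)) := Real.exp_lt_exp.2 hcon
    _ = w1 * X + w2 * Y := Real.exp_log hpos

lemma young_eq {p q x y : ℝ} (hpq : p.HolderConjugate q) (hx : 0 ≤ x) (hy : 0 ≤ y)
    (h : x * y = x ^ p / p + y ^ q / q) : x ^ p = y ^ q := by
  by_contra hne
  have hXp : 0 ≤ x ^ p := Real.rpow_nonneg hx p
  have hYq : 0 ≤ y ^ q := Real.rpow_nonneg hy q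
  have hlt := my_geom_lt (inv_pos.2 hpq.pos) (inv_pos.2 hpq.symm.pos)
    hpq.inv_add_inv_eq_one hXp hYq hne
  rw [Real.rpow_rpow_inv hx hpq.ne_zero, Real.rpow_rpow_inv hy hpq.symm.ne_zero] at hlt
  rw [div_eq_inv_mul, div_eq_inv_mul] at h
  linarith

lemma key_half {p q : ℝ} (hpq : p.HolderConjugate q) {c s a b : ℝ}
    (hc : 0 ≤ c) (hs : 0 ≤ s) (hcs : c ^ 2 + s ^ 2 = 1)
    (hab : |a| ^ q + |b| ^ q ≤ 1)
    (heq : a * c ^ (2 / p) + b * s ^ (2 / p) = 1) :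
    a = c ^ (2 / q) := by
  have hp0 : 0 < p := hpq.pos
  have hq0 : 0 < q := hpq.symm.pos
  set t1 := c ^ (2 / p) with ht1
  set t2 := s ^ (2 / p) with ht2
  have ht1n : 0 ≤ t1 := Real.rpow_nonneg hc _
  have ht2n : 0 ≤ t2 := Real.rpow_nonneg hs _
  have h5 : t1 ^ p = c ^ 2 := by
    rw [ht1, ← Real.rpow_natCast c 2, ← Real.rpow_mul hc]
    congr 1
    push_cast
    all_goals field_simp
  have h6 : t2 ^ p = s ^ 2 := by
    rw [ht2, ← Real.rpow_natCast s 2, ← Real.rpow_mul hs]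
    congr 1
    push_cast
    all_goals field_simp
  have y1 := Real.young_inequality_of_nonneg ht1n (abs_nonneg a) hpq
  have y2 := Real.young_inequality_of_nonneg ht2n (abs_nonneg b) hpq
  rw [h5] at y1
  rw [h6] at y2
  have h1 : a * t1 ≤ t1 * |a| := (mul_le_mul_of_nonneg_right (le_abs_self a) ht1n).trans_eq (mul_comm _ _)
  have h2 : b * t2 ≤ t2 * |b| := (mul_le_mul_of_nonneg_right (le_abs_self b) ht2n).trans_eq (mul_comm _ _)
  have hb1 : c ^ 2 / p + |a| ^ q / q + (s ^ 2 / p + |b| ^ q / q) ≤ 1 := by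
    have e1 : c ^ 2 / p + s ^ 2 / p = 1 / p := by rw [← add_div, hcs]
    have e2 : |a| ^ q / q + |b| ^ q / q ≤ 1 / q := by
      rw [← add_div]; gcongr
    have e3 : 1 / p + 1 / q = 1 := by
      rw [one_div, one_div]; exact hpq.inv_add_inv_eq_one
    linarith
  have e1 : t1 * |a| = c ^ 2 / p + |a| ^ q / q := by linarith
  have ya : t1 ^ p = |a| ^ q := young_eq hpq ht1n (abs_nonneg a) (by rw [h5]; exact e1)
  have hAq : |a| ^ q = c ^ 2 := by rw [← ya, h5]
  have hA : |a| = c ^ (2 / q) := by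
    have h' : (|a| ^ q) ^ q⁻¹ = |a| := Real.rpow_rpow_inv (abs_nonneg a) hq0.ne'
    rw [← h', hAq, ← Real.rpow_natCast c 2, ← Real.rpow_mul hc]
    congr 1
  rcases eq_or_lt_of_le hc with hc0 | hc0
  · have hz : c ^ (2 / q) = 0 := by
      rw [← hc0]; exact Real.zero_rpow (by positivity)
    rw [hz]
    rw [hz] at hA
    exact abs_eq_zero.mp hA
  · have ht1p : 0 < t1 := Real.rpow_pos_of_pos hc0 _
    have e0 : a * t1 = t1 * |a| := by linarith
    rw [mul_comm t1] at e0
    have : a = |a| := mul_right_cancel₀ ht1p.ne' e0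
    rw [this, hA]

lemma key {p q : ℝ} (hpq : p.HolderConjugate q) {c s a b : ℝ}
    (hc : 0 ≤ c) (hs : 0 ≤ s) (hcs : c ^ 2 + s ^ 2 = 1)
    (hab : |a| ^ q + |b| ^ q ≤ 1)
    (heq : a * c ^ (2 / p) + b * s ^ (2 / p) = 1) :
    a = c ^ (2 / q) ∧ b = s ^ (2 / q) := by
  have hab' : |b| ^ q + |a| ^ q ≤ 1 := by linarith
  have hcs' : s ^ 2 + c ^ 2 = 1 := by linarith
  have heq' : b * s ^ (2 / p) + a * c ^ (2 / p) = 1 := by linarith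
  exact ⟨key_half hpq hc hs hcs hab heq, key_half hpq hs hc hcs' hab' heq'⟩


lemma abs_q_sub_one {q x : ℝ} (hq : 1 < q) :
    |Real.sign x * |x| ^ (q - 1)| = |x| ^ (q - 1) := by
  rcases lt_trichotomy x 0 with h | h | h
  · rw [Real.sign_of_neg h, abs_mul, abs_neg, abs_one, one_mul,
      abs_of_nonneg (Real.rpow_nonneg (abs_nonneg x) _)]
  · subst h
    simp [Real.sign_zero, Real.zero_rpow (by linarith : q - 1 ≠ 0)]
  · rw [Real.sign_of_pos h, abs_mul, abs_one, one_mul,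
      abs_of_nonneg (Real.rpow_nonneg (abs_nonneg x) _)]

lemma self_mul_sign_mul {q x : ℝ} (hq : 1 < q) :
    x * (Real.sign x * |x| ^ (q - 1)) = |x| ^ q := by
  rcases lt_trichotomy x 0 with h | h | h
  · rw [Real.sign_of_neg h]
    have hx : 0 < |x| := abs_pos.2 h.ne
    have : |x| ^ q = |x| ^ (1 + (q - 1)) := by norm_num
    rw [this, Real.rpow_add hx, Real.rpow_one, abs_of_neg h]
    ring
  · subst h
    simp [Real.zero_rpow (by linarith : q ≠ 0)]
  · rw [Real.sign_of_pos h]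
    have hx : 0 < |x| := abs_pos.2 h.ne'
    have : |x| ^ q = |x| ^ (1 + (q - 1)) := by norm_num
    rw [this, Real.rpow_add hx, Real.rpow_one, abs_of_pos h]
    ring

lemma polar_eq {p q : ℝ} (hpq : p.HolderConjugate q) :
    polarSet (lpBall p) = lpBall q := by
  have hp0 : 0 < p := hpq.pos
  have hq0 : 0 < q := hpq.symm.pos
  have hq1 : 1 < q := hpq.symm.lt
  have hsum : 1 / p + 1 / q = 1 := by
    rw [one_div, one_div]; exact hpq.inv_add_inv_eq_one
  ext ⟨a, b⟩
  simp only [polarSet, lpBall, mem_setOf_eq]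
  constructor
  · intro h
    by_contra hS
    push_neg at hS
    set S := |a| ^ q + |b| ^ q with hSdef
    have hS0 : 0 < S := by linarith
    set u := Real.sign a * |a| ^ (q - 1) / S ^ (1 / p) with hu
    set v := Real.sign b * |b| ^ (q - 1) / S ^ (1 / p) with hv
    have hSp : 0 < S ^ (1 / p) := Real.rpow_pos_of_pos hS0 _
    have hq1p : (q - 1) * p = q := by
      have := hpq.mul_eq_add
      have hp1 : p ≠ 1 := by
        intro h1
        rw [h1] at this
        linarith
      field_simp at this ⊢
      nlinarith [hpq.sub_one_mul_conj]
    have habs : ∀ x : ℝ, |Real.sign x * |x| ^ (q - 1) / S ^ (1 / p)| ^ p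
        = |x| ^ q / S := by
      intro x
      rw [abs_div, abs_q_sub_one hq1, abs_of_pos hSp,
        Real.div_rpow (Real.rpow_nonneg (abs_nonneg x) _) hSp.le,
        ← Real.rpow_mul (abs_nonneg x), hq1p, one_div,
        Real.rpow_inv_rpow hS0.le hp0.ne']
    have hmem : (u, v) ∈ lpBall p := by
      simp only [lpBall, mem_setOf_eq]
      rw [hu, hv, habs a, habs b, ← add_div, ← hSdef, div_self hS0.ne']
    have hval := h (u, v) hmem
    simp only at hval
    have key2 : a * u + b * v = S / S ^ (1 / p) := by
      rw [hu, hv, mul_div_assoc', mul_div_assoc', ← add_div,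
        self_mul_sign_mul hq1, self_mul_sign_mul hq1]
    have hSq : S ^ (1 / q) = S / S ^ (1 / p) := by
      rw [show (1/q : ℝ) = 1 - 1/p by linarith, Real.rpow_sub hS0, Real.rpow_one]
    rw [key2, ← hSq] at hval
    have : 1 < S ^ (1 / q) :=
      (Real.one_lt_rpow_iff_of_pos hS0).2 (Or.inl ⟨hS, by positivity⟩)
    linarith
  · intro hab ⟨u, w⟩ huw
    simp only [mem_setOf_eq] at huw ⊢
    have y1 := Real.young_inequality_of_nonneg (abs_nonneg u) (abs_nonneg a) hpq
    have y2 := Real.young_inequality_of_nonneg (abs_nonneg w) (abs_nonneg b) hpq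
    have h1 : a * u ≤ |u| * |a| := by
      calc a * u ≤ |a * u| := le_abs_self _
        _ = |u| * |a| := by rw [abs_mul, mul_comm]
    have h2 : b * w ≤ |w| * |b| := by
      calc b * w ≤ |b * w| := le_abs_self _
        _ = |w| * |b| := by rw [abs_mul, mul_comm]
    have e1 : |u| ^ p / p + |w| ^ p / p ≤ 1 / p := by
      rw [← add_div]; gcongr
    have e2 : |a| ^ q / q + |b| ^ q / q ≤ 1 / q := by
      rw [← add_div]; gcongr
    linarith

/-- For `1 < p < ∞` with `pq = p + q`, the polar of the unit `Lᵖ`-ball is the unit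
`L^q`-ball, and if `(cos_Ω θ, sin_Ω θ) = ((cos φ)^{2/p}, (sin φ)^{2/p})` for `φ ∈ [0, π/2]`
and `θ°` corresponds to `θ`, then
`(cos_{Ω°} θ°, sin_{Ω°} θ°) = ((cos φ)^{2/q}, (sin φ)^{2/q})`. -/
theorem stmt13 (p q : ℝ) (hp : 1 < p) (hpq : p * q = p + q)
    (P Q : ℝ → ℝ × ℝ) (hP : IsCT (lpBall p) P) (hQ : IsCT (polarSet (lpBall p)) Q) :
    polarSet (lpBall p) = lpBall q ∧
    ∀ φ ∈ Set.Icc (0 : ℝ) (Real.pi / 2), ∀ θ θpol : ℝ,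
      P θ = (Real.cos φ ^ (2 / p), Real.sin φ ^ (2 / p)) →
      Supports (lpBall p) (P θ) (Q θpol) →
      Q θpol = (Real.cos φ ^ (2 / q), Real.sin φ ^ (2 / q)) := by

  have hpq' : p.HolderConjugate q := isConj_of p q hp hpq
  refine ⟨polar_eq hpq', ?_⟩
  intro φ hφ θ θpol hPθ hsup
  obtain ⟨hsup1, hsup2⟩ := hsup
  have hpi := Real.pi_pos
  have hc : 0 ≤ Real.cos φ :=
    Real.cos_nonneg_of_mem_Icc ⟨by linarith [hφ.1], hφ.2⟩
  have hs : 0 ≤ Real.sin φ :=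
    Real.sin_nonneg_of_nonneg_of_le_pi hφ.1 (by linarith [hφ.2])
  have hcs : Real.cos φ ^ 2 + Real.sin φ ^ 2 = 1 := Real.cos_sq_add_sin_sq φ
  have hQmem : Q θpol ∈ lpBall q := by
    rw [← polar_eq hpq']
    exact hsup2
  have heq : (Q θpol).1 * Real.cos φ ^ (2 / p) + (Q θpol).2 * Real.sin φ ^ (2 / p) = 1 := by
    rw [hPθ] at hsup1
    exact hsup1
  obtain ⟨ea, eb⟩ := key hpq' hc hs hcs hQmem heq
  exact Prod.ext ea eb
end

section
/- Let Ω = {(u,v) ∈ ℝ² : |u| + |v| ≤ 1}. Then cos_Ω and sin_Ω are periodic with period 4, cos_Ω θ = |θ − 2| − 1 for θ ∈ [0, 4], and sin_Ω θ = cos_Ω(θ − 1). -/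
open MeasureTheory Real Set

def T0 : Set (ℝ × ℝ) := {a | 0 ≤ a.1 ∧ 0 ≤ a.2 ∧ a.1 + a.2 ≤ 1}

noncomputable def Lmap (p q : ℝ × ℝ) : ℝ × ℝ →ₗ[ℝ] ℝ × ℝ where
  toFun a := (a.1 * p.1 + a.2 * q.1, a.1 * p.2 + a.2 * q.2)
  map_add' a b := by ext <;> simp <;> ring
  map_smul' c a := by ext <;> simp <;> ring

lemma det_Lmap (p q : ℝ × ℝ) : LinearMap.det (Lmap p q) = p.1 * q.2 - p.2 * q.1 := by
  rw [← LinearMap.det_toMatrix (Module.Basis.finTwoProd ℝ), Matrix.det_fin_two]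
  simp [LinearMap.toMatrix_apply, Lmap]
  ring

lemma isClosed_T0 : IsClosed T0 := by
  have h1 : IsClosed {a : ℝ × ℝ | 0 ≤ a.1} := isClosed_le continuous_const continuous_fst
  have h2 : IsClosed {a : ℝ × ℝ | 0 ≤ a.2} := isClosed_le continuous_const continuous_snd
  have h3 : IsClosed {a : ℝ × ℝ | a.1 + a.2 ≤ 1} :=
    isClosed_le (continuous_fst.add continuous_snd) continuous_const
  exact (h1.inter (h2.inter h3))

lemma convex_T0 : Convex ℝ T0 := by
  intro x hx y hy a b ha hb hab
  obtain ⟨h1, h2, h3⟩ := hx; obtain ⟨k1, k2, k3⟩ := hy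
  refine ⟨?_, ?_, ?_⟩ <;> simp only [Prod.fst_add, Prod.snd_add, Prod.smul_fst, Prod.smul_snd,
    smul_eq_mul] <;> nlinarith

lemma interior_T0_subset : interior T0 ⊆ {a : ℝ × ℝ | 0 < a.1 ∧ 0 < a.2 ∧ a.1 + a.2 < 1} := by
  intro p hp
  rcases Metric.isOpen_iff.1 isOpen_interior p hp with ⟨ε, hε, hball⟩
  have hsub : Metric.ball p ε ⊆ T0 := hball.trans interior_subset
  have key : ∀ q : ℝ × ℝ, dist q p < ε → q ∈ T0 := fun q hq => hsub hq
  have e2 : (0:ℝ) < ε/2 := by linarith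
  have habs : |ε/2| = ε/2 := abs_of_pos e2
  have d1 : dist ((p.1 - ε/2, p.2) : ℝ × ℝ) p < ε := by
    rw [Prod.dist_eq, Real.dist_eq, Real.dist_eq]
    apply max_lt
    · rw [show p.1 - ε/2 - p.1 = -(ε/2) by ring, abs_neg, habs]; linarith
    · simp; linarith
  have d2 : dist ((p.1, p.2 - ε/2) : ℝ × ℝ) p < ε := by
    rw [Prod.dist_eq, Real.dist_eq, Real.dist_eq]
    apply max_lt
    · simp; linarith
    · rw [show p.2 - ε/2 - p.2 = -(ε/2) by ring, abs_neg, habs]; linarith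
  have d3 : dist ((p.1 + ε/2, p.2) : ℝ × ℝ) p < ε := by
    rw [Prod.dist_eq, Real.dist_eq, Real.dist_eq]
    apply max_lt
    · rw [show p.1 + ε/2 - p.1 = ε/2 by ring, habs]; linarith
    · simp; linarith
  have m1 := key _ d1
  have m2 := key _ d2
  have m3 := key _ d3
  obtain ⟨a1, a2, a3⟩ := m1; obtain ⟨b1, b2, b3⟩ := m2; obtain ⟨c1, c2, c3⟩ := m3
  simp only [mem_setOf_eq] at *
  refine ⟨by linarith, by linarith, by linarith⟩

lemma volume_T0 : volume T0 = ENNReal.ofReal (1/2) := by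
  set f : ℝ → ℝ := fun _ => 0 with hf
  set g : ℝ → ℝ := fun x => 1 - x with hg
  have hreg : volume.prod volume (regionBetween f g (Ioo 0 1)) = ENNReal.ofReal (1/2) := by
    rw [volume_regionBetween_eq_integral]
    · congr 1
      have hgf : (g - f) = fun y : ℝ => 1 - y := by funext y; simp [hf, hg]
      rw [hgf]
      have : ∫ y in Ioo (0:ℝ) 1, (1 - y) = ∫ y in (0:ℝ)..1, (1 - y) := by
        rw [intervalIntegral.integral_of_le zero_le_one, ← integral_Ioc_eq_integral_Ioo]
      rw [this,
        intervalIntegral.integral_sub intervalIntegrable_const intervalIntegral.intervalIntegrable_id]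
      simp [integral_id]
      norm_num
    · exact integrableOn_const measure_Ioo_lt_top.ne
    · exact ((continuous_const.sub continuous_id).integrableOn_Icc).mono_set Ioo_subset_Icc_self
    · exact measurableSet_Ioo
    · intro x hx; simp [hf, hg]; exact le_of_lt (by rcases hx with ⟨h1,h2⟩; linarith)
  have hsub1 : regionBetween f g (Ioo 0 1) ⊆ T0 := by
    rintro ⟨x, y⟩ ⟨hx, hy⟩
    simp only [mem_Ioo] at hx hy
    exact ⟨hx.1.le, hy.1.le, by simp [hf,hg] at hy; linarith [hy.2]⟩
  have hsub2 : T0 \ regionBetween f g (Ioo 0 1) ⊆ frontier T0 := by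
    rintro ⟨x, y⟩ ⟨hm, hnm⟩
    rw [frontier, isClosed_T0.closure_eq]
    refine ⟨hm, fun hint => hnm ?_⟩
    have := interior_T0_subset hint
    simp only [mem_setOf_eq] at this
    exact ⟨by constructor <;> simp at this ⊢ <;> [exact this.1; linarith [this.2.1, this.2.2]],
      by simp [hf, hg]; exact ⟨this.2.1, by linarith [this.2.2]⟩⟩
  have hfr : volume (frontier T0) = 0 := convex_T0.addHaar_frontier volume
  have h1 : volume T0 ≤ ENNReal.ofReal (1/2) := by
    calc volume T0 ≤ volume (regionBetween f g (Ioo 0 1) ∪ frontier T0) := by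
          apply measure_mono; intro v hv
          by_cases h : v ∈ regionBetween f g (Ioo 0 1)
          · exact Or.inl h
          · exact Or.inr (hsub2 ⟨hv, h⟩)
      _ ≤ volume (regionBetween f g (Ioo 0 1)) + volume (frontier T0) := measure_union_le _ _
      _ = ENNReal.ofReal (1/2) := by
          rw [hfr, add_zero, Measure.volume_eq_prod, hreg]
  have h2 : ENNReal.ofReal (1/2) ≤ volume T0 := by
    rw [← hreg, ← Measure.volume_eq_prod]
    exact measure_mono hsub1
  exact le_antisymm h1 h2

noncomputable def Tri (p q : ℝ × ℝ) : Set (ℝ × ℝ) := Lmap p q '' T0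

lemma volume_Tri (p q : ℝ × ℝ) :
    volume (Tri p q) = ENNReal.ofReal (|p.1 * q.2 - p.2 * q.1| / 2) := by
  rw [Tri, Measure.addHaar_image_linearMap, det_Lmap, volume_T0, ← ENNReal.ofReal_mul (abs_nonneg _)]
  ring_nf

lemma mem_Tri {p q : ℝ × ℝ} {v : ℝ × ℝ} :
    v ∈ Tri p q ↔ ∃ a b : ℝ, 0 ≤ a ∧ 0 ≤ b ∧ a + b ≤ 1 ∧
      v.1 = a * p.1 + b * q.1 ∧ v.2 = a * p.2 + b * q.2 := by
  constructor
  · rintro ⟨⟨a, b⟩, ⟨h1, h2, h3⟩, rfl⟩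
    exact ⟨a, b, h1, h2, h3, rfl, rfl⟩
  · rintro ⟨a, b, h1, h2, h3, hv1, hv2⟩
    refine ⟨(a, b), ⟨h1, h2, h3⟩, ?_⟩
    simp only [Lmap, LinearMap.coe_mk, AddHom.coe_mk]
    exact Prod.ext hv1.symm hv2.symm

lemma null_v1 : volume {v : ℝ × ℝ | v.1 = 0} = 0 := by
  have : {v : ℝ × ℝ | v.1 = 0} = ({0} : Set ℝ) ×ˢ (univ : Set ℝ) := by
    ext v
    constructor
    · intro h; exact ⟨h, mem_univ _⟩
    · rintro ⟨h, -⟩; exact h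
  rw [this, Measure.volume_eq_prod, Measure.prod_prod]
  simp

lemma null_v2 : volume {v : ℝ × ℝ | v.2 = 0} = 0 := by
  have : {v : ℝ × ℝ | v.2 = 0} = (univ : Set ℝ) ×ˢ ({0} : Set ℝ) := by
    ext v
    constructor
    · intro h; exact ⟨mem_univ _, h⟩
    · rintro ⟨-, h⟩; exact h
  rw [this, Measure.volume_eq_prod, Measure.prod_prod]
  simp

lemma vol_sandwich {s t z : Set (ℝ × ℝ)} (h1 : s ⊆ t) (h2 : t \ s ⊆ z)
    (hz : volume z = 0) : volume t = volume s := by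
  refine le_antisymm ?_ (measure_mono h1)
  calc volume t ≤ volume (s ∪ z) := by
        apply measure_mono; intro v hv
        by_cases h : v ∈ s
        · exact Or.inl h
        · exact Or.inr (h2 ⟨hv, h⟩)
    _ ≤ volume s + volume z := measure_union_le _ _
    _ = volume s := by rw [hz, add_zero]


noncomputable def cplx (v : ℝ × ℝ) : ℂ := (v.1 : ℂ) + (v.2 : ℂ) * Complex.I

@[simp] lemma cplx_re (v : ℝ × ℝ) : (cplx v).re = v.1 := by simp [cplx]
@[simp] lemma cplx_im (v : ℝ × ℝ) : (cplx v).im = v.2 := by simp [cplx]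

lemma cplx_ne_zero {v : ℝ × ℝ} (h : v ≠ 0) : cplx v ≠ 0 := by
  intro hc
  apply h
  have h1 : (cplx v).re = 0 := by rw [hc]; simp
  have h2 : (cplx v).im = 0 := by rw [hc]; simp
  simp at h1 h2
  exact Prod.ext h1 h2

/-- sign of the cross product determines order of args, when the difference is in `[-π, π)`. -/
lemma arg_le_arg_iff {z w : ℂ} (hz : z ≠ 0) (hw : w ≠ 0)
    (h1 : -π ≤ w.arg - z.arg) (h2 : w.arg - z.arg < π) :
    w.arg ≤ z.arg ↔ z.re * w.im - z.im * w.re ≤ 0 := by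
  have haz : (0:ℝ) < ‖z‖ := norm_pos_iff.mpr hz
  have haw : (0:ℝ) < ‖w‖ := norm_pos_iff.mpr hw
  have key : z.re * w.im - z.im * w.re = ‖z‖ * ‖w‖ * Real.sin (w.arg - z.arg) := by
    rw [Real.sin_sub, Complex.sin_arg z, Complex.sin_arg w, Complex.cos_arg hz, Complex.cos_arg hw]
    field_simp
  rw [key]
  constructor
  · intro h
    have : Real.sin (w.arg - z.arg) ≤ 0 :=
      Real.sin_nonpos_of_nonpos_of_neg_pi_le (by linarith) h1
    exact mul_nonpos_of_nonneg_of_nonpos (by positivity) this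
  · intro h
    by_contra hlt
    push_neg at hlt
    have : 0 < Real.sin (w.arg - z.arg) :=
      Real.sin_pos_of_pos_of_lt_pi (by linarith) h2
    have := mul_pos (mul_pos haz haw) this
    linarith

lemma polarAngle_eq (v : ℝ × ℝ) : polarAngle v =
    if 0 ≤ (cplx v).arg then (cplx v).arg else (cplx v).arg + 2 * π := rfl

lemma sector_upper {x : ℝ × ℝ} (hx2 : 0 ≤ x.2) (hx : 0 < x.2 ∨ x.1 < 0) (v : ℝ × ℝ) :
    polarAngle v ≤ polarAngle x ↔ (0 ≤ v.2 ∧ x.1 * v.2 - x.2 * v.1 ≤ 0) := by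
  have hxne : x ≠ 0 := by
    intro h; rcases hx with h'|h' <;> rw [h] at h' <;> simp at h'
  have hargx0 : 0 ≤ (cplx x).arg := Complex.arg_nonneg_iff.2 (by simpa)
  have hpx : polarAngle x = (cplx x).arg := by rw [polarAngle_eq, if_pos hargx0]
  have hargxpos : 0 < (cplx x).arg := by
    rcases hargx0.lt_or_eq with h | h
    · exact h
    · exfalso
      obtain ⟨hre, him⟩ := Complex.arg_eq_zero_iff.1 h.symm
      simp at hre him
      rcases hx with h'|h'
      · rw [him] at h'; exact lt_irrefl _ h'
      · linarith
  by_cases hv2 : 0 ≤ v.2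
  · have hargv0 : 0 ≤ (cplx v).arg := Complex.arg_nonneg_iff.2 (by simpa)
    have hpv : polarAngle v = (cplx v).arg := by rw [polarAngle_eq, if_pos hargv0]
    rw [hpv, hpx]
    by_cases hv0 : v = 0
    · subst hv0
      have : cplx (0 : ℝ × ℝ) = 0 := by simp [cplx]
      simp [this, Complex.arg_zero, hargx0]
    · rw [arg_le_arg_iff (cplx_ne_zero hxne) (cplx_ne_zero hv0)
        (by linarith [Complex.arg_le_pi (cplx x)])
        (by linarith [Complex.arg_le_pi (cplx v)])]
      simp only [cplx_re, cplx_im]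
      exact ⟨fun h => ⟨hv2, h⟩, fun h => h.2⟩
  · push_neg at hv2
    have hargvneg : (cplx v).arg < 0 := Complex.arg_neg_iff.2 (by simpa)
    have hpv : polarAngle v = (cplx v).arg + 2 * π := by
      rw [polarAngle_eq, if_neg (not_le.2 hargvneg)]
    constructor
    · intro h
      exfalso
      rw [hpv, hpx] at h
      have := Complex.neg_pi_lt_arg (cplx v)
      have := Complex.arg_le_pi (cplx x)
      have := Real.pi_pos
      linarith
    · rintro ⟨h, -⟩; linarith

lemma sector_lower {x : ℝ × ℝ} (hx2 : x.2 < 0) (v : ℝ × ℝ) :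
    polarAngle v ≤ polarAngle x ↔ (0 ≤ v.2 ∨ x.1 * v.2 - x.2 * v.1 ≤ 0) := by
  have hxne : x ≠ 0 := by
    intro h; rw [h] at hx2; simp at hx2
  have hargxneg : (cplx x).arg < 0 := Complex.arg_neg_iff.2 (by simpa)
  have hpx : polarAngle x = (cplx x).arg + 2 * π := by
    rw [polarAngle_eq, if_neg (not_le.2 hargxneg)]
  have hax := Complex.neg_pi_lt_arg (cplx x)
  by_cases hv2 : 0 ≤ v.2
  · have hargv0 : 0 ≤ (cplx v).arg := Complex.arg_nonneg_iff.2 (by simpa)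
    have hpv : polarAngle v = (cplx v).arg := by rw [polarAngle_eq, if_pos hargv0]
    constructor
    · intro _; exact Or.inl hv2
    · intro _
      rw [hpv, hpx]
      have := Complex.arg_le_pi (cplx v)
      have := Real.pi_pos
      linarith
  · push_neg at hv2
    have hvne : v ≠ 0 := by
      intro h; rw [h] at hv2; simp at hv2
    have hargvneg : (cplx v).arg < 0 := Complex.arg_neg_iff.2 (by simpa)
    have hpv : polarAngle v = (cplx v).arg + 2 * π := by
      rw [polarAngle_eq, if_neg (not_le.2 hargvneg)]
    have hav := Complex.neg_pi_lt_arg (cplx v)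
    rw [hpv, hpx]
    have h1 : (cplx v).arg + 2 * π ≤ (cplx x).arg + 2 * π ↔ (cplx v).arg ≤ (cplx x).arg := by
      constructor <;> intro <;> linarith
    rw [h1, arg_le_arg_iff (cplx_ne_zero hxne) (cplx_ne_zero hvne)
      (by linarith) (by linarith)]
    simp only [cplx_re, cplx_im]
    constructor
    · intro h; exact Or.inr h
    · rintro (h | h)
      · exfalso; linarith
      · exact h

def Omg : Set (ℝ × ℝ) := {v | |v.1| + |v.2| ≤ 1}

lemma vol_case1 {t : ℝ} (h0 : 0 < t) (h1 : t ≤ 1) :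
    volume {v | v ∈ Omg ∧ polarAngle v ≤ polarAngle (1 - t, t)} = ENNReal.ofReal (t / 2) := by
  have hset : {v | v ∈ Omg ∧ polarAngle v ≤ polarAngle (1 - t, t)} = Tri (1, 0) (1 - t, t) := by
    ext v
    rw [mem_setOf_eq, sector_upper (by simp; linarith) (Or.inl (by simpa using h0)) v, mem_Tri]
    simp only [Omg, mem_setOf_eq]
    constructor
    · rintro ⟨hΩ, hv2, hcross⟩
      have hv1 : 0 ≤ v.1 := by nlinarith
      rw [abs_of_nonneg hv1, abs_of_nonneg hv2] at hΩ
      refine ⟨(t * v.1 - (1 - t) * v.2) / t, v.2 / t, ?_, ?_, ?_, ?_, ?_⟩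
      · apply div_nonneg _ h0.le; linarith
      · exact div_nonneg hv2 h0.le
      · rw [← add_div, div_le_one h0]; nlinarith
      · field_simp; ring
      · field_simp; ring
    · rintro ⟨a, b, ha, hb, hab, hv1, hv2⟩
      have h1' : 0 ≤ v.1 := by rw [hv1]; nlinarith
      have h2' : 0 ≤ v.2 := by rw [hv2]; nlinarith
      refine ⟨?_, h2', ?_⟩
      · rw [abs_of_nonneg h1', abs_of_nonneg h2', hv1, hv2]; nlinarith
      · rw [hv1, hv2]; nlinarith
  rw [hset, volume_Tri]
  congr 1
  rw [show (1:ℝ) * t - 0 * (1 - t) = t by ring, abs_of_pos h0]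

lemma meas_half1 : MeasurableSet {v : ℝ × ℝ | 0 ≤ v.1} :=
  measurableSet_le measurable_const measurable_fst

lemma meas_half2 : MeasurableSet {v : ℝ × ℝ | 0 ≤ v.2} :=
  measurableSet_le measurable_const measurable_snd

lemma vol_case2 {t : ℝ} (h0 : 1 < t) (h1 : t ≤ 2) :
    volume {v | v ∈ Omg ∧ polarAngle v ≤ polarAngle (1 - t, 2 - t)} = ENNReal.ofReal (t / 2) := by
  set S := {v | v ∈ Omg ∧ polarAngle v ≤ polarAngle (1 - t, 2 - t)} with hS
  have hSdef : S = {v : ℝ × ℝ | v ∈ Omg ∧ 0 ≤ v.2 ∧ (1 - t) * v.2 - (2 - t) * v.1 ≤ 0} := by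
    ext v
    rw [hS, mem_setOf_eq, sector_upper (by simp; linarith) (Or.inr (by simp; linarith)) v]
    rfl
  have hsplit := measure_inter_add_diff (μ := volume) S meas_half1
  have hpart1 : S ∩ {v | 0 ≤ v.1} = Tri (1, 0) (0, 1) := by
    ext v
    rw [hSdef, mem_inter_iff, mem_setOf_eq, mem_setOf_eq, mem_Tri]
    simp only [Omg, mem_setOf_eq]
    constructor
    · rintro ⟨⟨hΩ, hv2, -⟩, hv1⟩
      rw [abs_of_nonneg hv1, abs_of_nonneg hv2] at hΩ
      exact ⟨v.1, v.2, hv1, hv2, hΩ, by ring, by ring⟩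
    · rintro ⟨a, b, ha, hb, hab, hv1, hv2⟩
      have h1' : 0 ≤ v.1 := by rw [hv1]; nlinarith
      have h2' : 0 ≤ v.2 := by rw [hv2]; nlinarith
      refine ⟨⟨?_, h2', ?_⟩, h1'⟩
      · rw [abs_of_nonneg h1', abs_of_nonneg h2', hv1, hv2]; nlinarith
      · nlinarith
  have hpart2 : volume (S \ {v | 0 ≤ v.1}) = ENNReal.ofReal ((t - 1) / 2) := by
    have hTri : Tri (0, 1) (1 - t, 2 - t) =
        {v : ℝ × ℝ | v.1 ≤ 0 ∧ (1 - t) * v.2 - (2 - t) * v.1 ≤ 0 ∧ v.2 - v.1 ≤ 1} := by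
      ext v
      rw [mem_Tri, mem_setOf_eq]
      constructor
      · rintro ⟨a, b, ha, hb, hab, hv1, hv2⟩
        norm_num at hv1 hv2
        refine ⟨by rw [hv1]; nlinarith, by rw [hv1, hv2]; nlinarith, by rw [hv1, hv2]; nlinarith⟩
      · rintro ⟨hv1, hcross, hΩ⟩
        have ht : (1 : ℝ) - t ≠ 0 := by linarith
        refine ⟨((1 - t) * v.2 - (2 - t) * v.1) / (1 - t), v.1 / (1 - t), ?_, ?_, ?_, ?_, ?_⟩
        · rw [div_nonneg_iff]; right; constructor <;> linarith
        · rw [div_nonneg_iff]; right; constructor <;> linarith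
        · rw [← add_div, div_le_one_iff]
          exact Or.inr (Or.inr ⟨by linarith, by nlinarith⟩)
        · norm_num; field_simp
        · norm_num; field_simp; ring
      
    have hsub : S \ {v | 0 ≤ v.1} ⊆ Tri (0, 1) (1 - t, 2 - t) := by
      rintro v ⟨hvS, hv1⟩
      rw [hSdef] at hvS
      obtain ⟨hΩ, hv2, hcross⟩ := hvS
      simp only [mem_setOf_eq, not_le] at hv1
      rw [hTri, mem_setOf_eq]
      simp only [Omg, mem_setOf_eq] at hΩ
      rw [abs_of_neg hv1, abs_of_nonneg hv2] at hΩ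
      exact ⟨hv1.le, hcross, by linarith⟩
    have hdiff : Tri (0, 1) (1 - t, 2 - t) \ (S \ {v | 0 ≤ v.1}) ⊆ {v : ℝ × ℝ | v.1 = 0} := by
      rintro v ⟨hvT, hvn⟩
      rw [hTri, mem_setOf_eq] at hvT
      obtain ⟨hv1, hcross, hΩ⟩ := hvT
      by_contra hne
      have hv1' : v.1 < 0 := lt_of_le_of_ne hv1 hne
      apply hvn
      have hv2 : 0 ≤ v.2 := by nlinarith
      refine ⟨?_, by simp only [mem_setOf_eq]; linarith⟩
      rw [hSdef, mem_setOf_eq]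
      refine ⟨?_, hv2, hcross⟩
      simp only [Omg, mem_setOf_eq]
      rw [abs_of_neg hv1', abs_of_nonneg hv2]
      linarith
    rw [← vol_sandwich hsub hdiff null_v1, volume_Tri]
    congr 1
    rw [show (0:ℝ) * (2 - t) - 1 * (1 - t) = t - 1 by ring, abs_of_pos (by linarith)]
  rw [← hsplit, hpart1, hpart2, volume_Tri]
  rw [show (1:ℝ) * 1 - 0 * 0 = 1 by ring, abs_one,
    ← ENNReal.ofReal_add (by norm_num) (by linarith)]
  congr 1
  ring

lemma vol_case3 {t : ℝ} (h0 : 2 < t) (h1 : t ≤ 3) :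
    volume {v | v ∈ Omg ∧ polarAngle v ≤ polarAngle (t - 3, 2 - t)} = ENNReal.ofReal (t / 2) := by
  set S := {v | v ∈ Omg ∧ polarAngle v ≤ polarAngle (t - 3, 2 - t)} with hS
  have hSdef : S = {v : ℝ × ℝ | v ∈ Omg ∧
      (0 ≤ v.2 ∨ (t - 3) * v.2 - (2 - t) * v.1 ≤ 0)} := by
    ext v
    rw [hS, mem_setOf_eq, sector_lower (by simp; linarith) v]
    rfl
  have hsplit := measure_inter_add_diff (μ := volume) S meas_half2
  have hsplit2 := measure_inter_add_diff (μ := volume) (S ∩ {v | 0 ≤ v.2}) meas_half1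
  -- upper-right piece
  have hur : (S ∩ {v | 0 ≤ v.2}) ∩ {v | 0 ≤ v.1} = Tri (1, 0) (0, 1) := by
    ext v
    rw [hSdef, mem_inter_iff, mem_inter_iff, mem_setOf_eq, mem_setOf_eq, mem_setOf_eq, mem_Tri]
    simp only [Omg, mem_setOf_eq]
    constructor
    · rintro ⟨⟨⟨hΩ, -⟩, hv2⟩, hv1⟩
      rw [abs_of_nonneg hv1, abs_of_nonneg hv2] at hΩ
      exact ⟨v.1, v.2, hv1, hv2, hΩ, by norm_num, by norm_num⟩
    · rintro ⟨a, b, ha, hb, hab, hv1, hv2⟩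
      norm_num at hv1 hv2
      refine ⟨⟨⟨?_, Or.inl (by rw [hv2]; linarith)⟩, by rw [hv2]; linarith⟩, by rw [hv1]; linarith⟩
      rw [abs_of_nonneg (by rw [hv1]; linarith), abs_of_nonneg (by rw [hv2]; linarith), hv1, hv2]
      linarith
  -- upper-left piece
  have hul : volume ((S ∩ {v | 0 ≤ v.2}) \ {v | 0 ≤ v.1}) = ENNReal.ofReal (1 / 2) := by
    have hTri : Tri (-1, 0) (0, 1) = {v : ℝ × ℝ | v.1 ≤ 0 ∧ 0 ≤ v.2 ∧ v.2 - v.1 ≤ 1} := by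
      ext v
      rw [mem_Tri, mem_setOf_eq]
      constructor
      · rintro ⟨a, b, ha, hb, hab, hv1, hv2⟩
        norm_num at hv1 hv2
        exact ⟨by rw [hv1]; linarith, by rw [hv2]; linarith, by rw [hv1, hv2]; linarith⟩
      · rintro ⟨hv1, hv2, hΩ⟩
        exact ⟨-v.1, v.2, by linarith, hv2, by linarith, by norm_num, by norm_num⟩
    have hsub : (S ∩ {v | 0 ≤ v.2}) \ {v | 0 ≤ v.1} ⊆ Tri (-1, 0) (0, 1) := by
      rintro v ⟨⟨hvS, hv2⟩, hv1⟩
      rw [hSdef] at hvS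
      simp only [mem_setOf_eq, not_le] at hv1 hv2 hvS ⊢
      obtain ⟨hΩ, -⟩ := hvS
      simp only [Omg, mem_setOf_eq] at hΩ
      rw [abs_of_neg hv1, abs_of_nonneg hv2] at hΩ
      rw [hTri, mem_setOf_eq]
      exact ⟨hv1.le, hv2, by linarith⟩
    have hdiff : Tri (-1, 0) (0, 1) \ ((S ∩ {v | 0 ≤ v.2}) \ {v | 0 ≤ v.1}) ⊆
        {v : ℝ × ℝ | v.1 = 0} := by
      rintro v ⟨hvT, hvn⟩
      rw [hTri, mem_setOf_eq] at hvT
      obtain ⟨hv1, hv2, hΩ⟩ := hvT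
      by_contra hne
      have hv1' : v.1 < 0 := lt_of_le_of_ne hv1 hne
      apply hvn
      refine ⟨⟨?_, by simp only [mem_setOf_eq]; linarith⟩, by simp only [mem_setOf_eq]; linarith⟩
      rw [hSdef, mem_setOf_eq]
      refine ⟨?_, Or.inl hv2⟩
      simp only [Omg, mem_setOf_eq]
      rw [abs_of_neg hv1', abs_of_nonneg hv2]
      linarith
    rw [← vol_sandwich hsub hdiff null_v1, volume_Tri]
    norm_num
  -- lower piece
  have hlo : volume (S \ {v | 0 ≤ v.2}) = ENNReal.ofReal ((t - 2) / 2) := by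
    have hTri : Tri (-1, 0) (t - 3, 2 - t) = {v : ℝ × ℝ | v.2 ≤ 0 ∧
        (t - 3) * v.2 - (2 - t) * v.1 ≤ 0 ∧ -v.1 - v.2 ≤ 1} := by
      ext v
      rw [mem_Tri, mem_setOf_eq]
      constructor
      · rintro ⟨a, b, ha, hb, hab, hv1, hv2⟩
        norm_num at hv1 hv2
        refine ⟨by rw [hv2]; nlinarith, by rw [hv1, hv2]; nlinarith, by rw [hv1, hv2]; nlinarith⟩
      · rintro ⟨hv2, hcross, hΩ⟩
        have ht : (2 : ℝ) - t ≠ 0 := by linarith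
        refine ⟨((t - 3) * v.2 - (2 - t) * v.1) / (2 - t), v.2 / (2 - t), ?_, ?_, ?_, ?_, ?_⟩
        · rw [div_nonneg_iff]; right; constructor <;> linarith
        · rw [div_nonneg_iff]; right; constructor <;> linarith
        · rw [← add_div, div_le_one_iff]
          exact Or.inr (Or.inr ⟨by linarith, by nlinarith⟩)
        · norm_num; field_simp; ring
        · norm_num; field_simp
    have hsub : S \ {v | 0 ≤ v.2} ⊆ Tri (-1, 0) (t - 3, 2 - t) := by
      rintro v ⟨hvS, hv2⟩
      rw [hSdef] at hvS
      simp only [mem_setOf_eq, not_le] at hv2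
      obtain ⟨hΩ, hd⟩ := hvS
      have hcross : (t - 3) * v.2 - (2 - t) * v.1 ≤ 0 := by
        rcases hd with h | h
        · linarith
        · exact h
      simp only [Omg, mem_setOf_eq] at hΩ
      rw [hTri, mem_setOf_eq]
      refine ⟨hv2.le, hcross, ?_⟩
      have := neg_abs_le v.1
      have := neg_abs_le v.2
      linarith
    have hdiff : Tri (-1, 0) (t - 3, 2 - t) \ (S \ {v | 0 ≤ v.2}) ⊆
        {v : ℝ × ℝ | v.2 = 0} := by
      rintro v ⟨hvT, hvn⟩
      rw [hTri, mem_setOf_eq] at hvT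
      obtain ⟨hv2, hcross, hΩ⟩ := hvT
      by_contra hne
      have hv2' : v.2 < 0 := lt_of_le_of_ne hv2 hne
      apply hvn
      have hv1 : v.1 ≤ 0 := by nlinarith
      refine ⟨?_, by simp only [mem_setOf_eq]; linarith⟩
      rw [hSdef, mem_setOf_eq]
      refine ⟨?_, Or.inr hcross⟩
      simp only [Omg, mem_setOf_eq]
      rw [abs_of_nonpos hv1, abs_of_neg hv2']
      linarith
    rw [← vol_sandwich hsub hdiff null_v2, volume_Tri]
    congr 1
    rw [show (-1:ℝ) * (2 - t) - 0 * (t - 3) = t - 2 by ring, abs_of_pos (by linarith)]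
  rw [← hsplit, ← hsplit2, hur, hul, hlo, volume_Tri]
  rw [show (1:ℝ) * 1 - 0 * 0 = 1 by ring, abs_one,
    ← ENNReal.ofReal_add (by norm_num) (by norm_num),
    ← ENNReal.ofReal_add (by norm_num) (by linarith)]
  congr 1
  ring

lemma vol_case4 {t : ℝ} (h0 : 3 < t) (h1 : t < 4) :
    volume {v | v ∈ Omg ∧ polarAngle v ≤ polarAngle (t - 3, t - 4)} = ENNReal.ofReal (t / 2) := by
  set S := {v | v ∈ Omg ∧ polarAngle v ≤ polarAngle (t - 3, t - 4)} with hS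
  have hSdef : S = {v : ℝ × ℝ | v ∈ Omg ∧
      (0 ≤ v.2 ∨ (t - 3) * v.2 - (t - 4) * v.1 ≤ 0)} := by
    ext v
    rw [hS, mem_setOf_eq, sector_lower (by simp; linarith) v]
    rfl
  have hsplit := measure_inter_add_diff (μ := volume) S meas_half2
  have hsplit2 := measure_inter_add_diff (μ := volume) (S ∩ {v | 0 ≤ v.2}) meas_half1
  have hsplit3 := measure_inter_add_diff (μ := volume) (S \ {v | 0 ≤ v.2}) meas_half1
  -- upper-right piece
  have hur : (S ∩ {v | 0 ≤ v.2}) ∩ {v | 0 ≤ v.1} = Tri (1, 0) (0, 1) := by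
    ext v
    rw [hSdef, mem_inter_iff, mem_inter_iff, mem_setOf_eq, mem_setOf_eq, mem_setOf_eq, mem_Tri]
    simp only [Omg, mem_setOf_eq]
    constructor
    · rintro ⟨⟨⟨hΩ, -⟩, hv2⟩, hv1⟩
      rw [abs_of_nonneg hv1, abs_of_nonneg hv2] at hΩ
      exact ⟨v.1, v.2, hv1, hv2, hΩ, by norm_num, by norm_num⟩
    · rintro ⟨a, b, ha, hb, hab, hv1, hv2⟩
      norm_num at hv1 hv2
      refine ⟨⟨⟨?_, Or.inl (by rw [hv2]; linarith)⟩, by rw [hv2]; linarith⟩, by rw [hv1]; linarith⟩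
      rw [abs_of_nonneg (by rw [hv1]; linarith), abs_of_nonneg (by rw [hv2]; linarith), hv1, hv2]
      linarith
  -- upper-left piece
  have hul : volume ((S ∩ {v | 0 ≤ v.2}) \ {v | 0 ≤ v.1}) = ENNReal.ofReal (1 / 2) := by
    have hTri : Tri (-1, 0) (0, 1) = {v : ℝ × ℝ | v.1 ≤ 0 ∧ 0 ≤ v.2 ∧ v.2 - v.1 ≤ 1} := by
      ext v
      rw [mem_Tri, mem_setOf_eq]
      constructor
      · rintro ⟨a, b, ha, hb, hab, hv1, hv2⟩
        norm_num at hv1 hv2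
        exact ⟨by rw [hv1]; linarith, by rw [hv2]; linarith, by rw [hv1, hv2]; linarith⟩
      · rintro ⟨hv1, hv2, hΩ⟩
        exact ⟨-v.1, v.2, by linarith, hv2, by linarith, by norm_num, by norm_num⟩
    have hsub : (S ∩ {v | 0 ≤ v.2}) \ {v | 0 ≤ v.1} ⊆ Tri (-1, 0) (0, 1) := by
      rintro v ⟨⟨hvS, hv2⟩, hv1⟩
      rw [hSdef] at hvS
      simp only [mem_setOf_eq, not_le] at hv1 hv2 hvS ⊢
      obtain ⟨hΩ, -⟩ := hvS
      simp only [Omg, mem_setOf_eq] at hΩ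
      rw [abs_of_neg hv1, abs_of_nonneg hv2] at hΩ
      rw [hTri, mem_setOf_eq]
      exact ⟨hv1.le, hv2, by linarith⟩
    have hdiff : Tri (-1, 0) (0, 1) \ ((S ∩ {v | 0 ≤ v.2}) \ {v | 0 ≤ v.1}) ⊆
        {v : ℝ × ℝ | v.1 = 0} := by
      rintro v ⟨hvT, hvn⟩
      rw [hTri, mem_setOf_eq] at hvT
      obtain ⟨hv1, hv2, hΩ⟩ := hvT
      by_contra hne
      have hv1' : v.1 < 0 := lt_of_le_of_ne hv1 hne
      apply hvn
      refine ⟨⟨?_, by simp only [mem_setOf_eq]; linarith⟩, by simp only [mem_setOf_eq]; linarith⟩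
      rw [hSdef, mem_setOf_eq]
      refine ⟨?_, Or.inl hv2⟩
      simp only [Omg, mem_setOf_eq]
      rw [abs_of_neg hv1', abs_of_nonneg hv2]
      linarith
    rw [← vol_sandwich hsub hdiff null_v1, volume_Tri]
    norm_num
  -- lower-left piece
  have hll : volume ((S \ {v | 0 ≤ v.2}) \ {v | 0 ≤ v.1}) = ENNReal.ofReal (1 / 2) := by
    have hTri : Tri (-1, 0) (0, -1) = {v : ℝ × ℝ | v.1 ≤ 0 ∧ v.2 ≤ 0 ∧ -v.1 - v.2 ≤ 1} := by
      ext v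
      rw [mem_Tri, mem_setOf_eq]
      constructor
      · rintro ⟨a, b, ha, hb, hab, hv1, hv2⟩
        norm_num at hv1 hv2
        exact ⟨by rw [hv1]; linarith, by rw [hv2]; linarith, by rw [hv1, hv2]; linarith⟩
      · rintro ⟨hv1, hv2, hΩ⟩
        exact ⟨-v.1, -v.2, by linarith, by linarith, by linarith, by norm_num, by norm_num⟩
    have hsub : (S \ {v | 0 ≤ v.2}) \ {v | 0 ≤ v.1} ⊆ Tri (-1, 0) (0, -1) := by
      rintro v ⟨⟨hvS, hv2⟩, hv1⟩
      rw [hSdef] at hvS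
      simp only [mem_setOf_eq, not_le] at hv1 hv2
      obtain ⟨hΩ, -⟩ := hvS
      simp only [Omg, mem_setOf_eq] at hΩ
      rw [abs_of_neg hv1, abs_of_neg hv2] at hΩ
      rw [hTri, mem_setOf_eq]
      exact ⟨hv1.le, hv2.le, by linarith⟩
    have hdiff : Tri (-1, 0) (0, -1) \ ((S \ {v | 0 ≤ v.2}) \ {v | 0 ≤ v.1}) ⊆
        {v : ℝ × ℝ | v.1 = 0} ∪ {v : ℝ × ℝ | v.2 = 0} := by
      rintro v ⟨hvT, hvn⟩
      rw [hTri, mem_setOf_eq] at hvT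
      obtain ⟨hv1, hv2, hΩ⟩ := hvT
      by_cases hne1 : v.1 = 0
      · exact Or.inl hne1
      by_cases hne2 : v.2 = 0
      · exact Or.inr hne2
      exfalso
      have hv1' : v.1 < 0 := lt_of_le_of_ne hv1 hne1
      have hv2' : v.2 < 0 := lt_of_le_of_ne hv2 hne2
      apply hvn
      refine ⟨⟨?_, by simp only [mem_setOf_eq]; linarith⟩, by simp only [mem_setOf_eq]; linarith⟩
      rw [hSdef, mem_setOf_eq]
      refine ⟨?_, Or.inr (by nlinarith)⟩
      simp only [Omg, mem_setOf_eq]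
      rw [abs_of_neg hv1', abs_of_neg hv2']
      linarith
    rw [← vol_sandwich hsub hdiff (measure_union_null null_v1 null_v2), volume_Tri]
    norm_num
  -- lower-right piece
  have hlr : volume ((S \ {v | 0 ≤ v.2}) ∩ {v | 0 ≤ v.1}) = ENNReal.ofReal ((t - 3) / 2) := by
    have hTri : Tri (0, -1) (t - 3, t - 4) = {v : ℝ × ℝ | 0 ≤ v.1 ∧
        (t - 3) * v.2 - (t - 4) * v.1 ≤ 0 ∧ v.1 - v.2 ≤ 1} := by
      ext v
      rw [mem_Tri, mem_setOf_eq]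
      constructor
      · rintro ⟨a, b, ha, hb, hab, hv1, hv2⟩
        norm_num at hv1 hv2
        refine ⟨by rw [hv1]; nlinarith, by rw [hv1, hv2]; nlinarith, by rw [hv1, hv2]; nlinarith⟩
      · rintro ⟨hv1, hcross, hΩ⟩
        have ht : t - 3 ≠ 0 := by linarith
        refine ⟨((t - 4) * v.1 - (t - 3) * v.2) / (t - 3), v.1 / (t - 3), ?_, ?_, ?_, ?_, ?_⟩
        · rw [div_nonneg_iff]; left; constructor <;> linarith
        · rw [div_nonneg_iff]; left; constructor <;> linarith
        · rw [← add_div, div_le_one (by linarith)]; nlinarith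
        · norm_num; field_simp
        · norm_num; field_simp; ring
    have hsub : (S \ {v | 0 ≤ v.2}) ∩ {v | 0 ≤ v.1} ⊆ Tri (0, -1) (t - 3, t - 4) := by
      rintro v ⟨⟨hvS, hv2⟩, hv1⟩
      rw [hSdef] at hvS
      simp only [mem_setOf_eq, not_le] at hv1 hv2
      obtain ⟨hΩ, hd⟩ := hvS
      have hcross : (t - 3) * v.2 - (t - 4) * v.1 ≤ 0 := by
        rcases hd with h | h
        · linarith
        · exact h
      simp only [Omg, mem_setOf_eq] at hΩ
      rw [abs_of_nonneg hv1, abs_of_neg hv2] at hΩ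
      rw [hTri, mem_setOf_eq]
      exact ⟨hv1, hcross, by linarith⟩
    have hdiff : Tri (0, -1) (t - 3, t - 4) \ ((S \ {v | 0 ≤ v.2}) ∩ {v | 0 ≤ v.1}) ⊆
        {v : ℝ × ℝ | v.2 = 0} := by
      rintro v ⟨hvT, hvn⟩
      rw [hTri, mem_setOf_eq] at hvT
      obtain ⟨hv1, hcross, hΩ⟩ := hvT
      by_contra hne
      have hv2 : v.2 ≤ 0 := by nlinarith
      have hv2' : v.2 < 0 := lt_of_le_of_ne hv2 hne
      apply hvn
      refine ⟨⟨?_, by simp only [mem_setOf_eq]; linarith⟩, by simp only [mem_setOf_eq]; linarith⟩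
      rw [hSdef, mem_setOf_eq]
      refine ⟨?_, Or.inr hcross⟩
      simp only [Omg, mem_setOf_eq]
      rw [abs_of_nonneg hv1, abs_of_neg hv2']
      linarith
    rw [← vol_sandwich hsub hdiff null_v2, volume_Tri]
    congr 1
    rw [show (0:ℝ) * (t - 4) - (-1) * (t - 3) = t - 3 by ring, abs_of_pos (by linarith)]
  rw [← hsplit, ← hsplit2, ← hsplit3, hur, hul, hll, hlr, volume_Tri]
  rw [show (1:ℝ) * 1 - 0 * 0 = 1 by ring, abs_one,
    ← ENNReal.ofReal_add (by linarith) (by linarith),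
    ← ENNReal.ofReal_add (by linarith) (by linarith),
    ← ENNReal.ofReal_add (by linarith) (by linarith)]
  congr 1
  ring

lemma vol_case0 :
    volume {v | v ∈ Omg ∧ polarAngle v ≤ polarAngle (1, 0)} = 0 := by
  apply measure_mono_null _ null_v2
  rintro v ⟨-, hv⟩
  have hc : cplx ((1:ℝ), (0:ℝ)) = 1 := by
    simp [cplx]
  have hp0 : polarAngle (1, 0) = 0 := by
    rw [polarAngle_eq, hc, Complex.arg_one, if_pos le_rfl]
  rw [hp0, polarAngle_eq] at hv
  have hpi := Real.pi_pos
  split_ifs at hv with h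
  · have : (cplx v).arg = 0 := le_antisymm hv h
    have := Complex.arg_eq_zero_iff.1 this
    simpa using this.2
  · exfalso
    have := Complex.neg_pi_lt_arg (cplx v)
    linarith

lemma vol_Omg : volume Omg = ENNReal.ofReal 2 := by
  have hsplit := measure_inter_add_diff (μ := volume) Omg meas_half2
  have hsplit2 := measure_inter_add_diff (μ := volume) (Omg ∩ {v | 0 ≤ v.2}) meas_half1
  have hsplit3 := measure_inter_add_diff (μ := volume) (Omg \ {v | 0 ≤ v.2}) meas_half1
  have hur : (Omg ∩ {v | 0 ≤ v.2}) ∩ {v | 0 ≤ v.1} = Tri (1, 0) (0, 1) := by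
    ext v
    rw [mem_inter_iff, mem_inter_iff, mem_setOf_eq, mem_setOf_eq, mem_Tri]
    simp only [Omg, mem_setOf_eq]
    constructor
    · rintro ⟨⟨hΩ, hv2⟩, hv1⟩
      rw [abs_of_nonneg hv1, abs_of_nonneg hv2] at hΩ
      exact ⟨v.1, v.2, hv1, hv2, hΩ, by norm_num, by norm_num⟩
    · rintro ⟨a, b, ha, hb, hab, hv1, hv2⟩
      norm_num at hv1 hv2
      refine ⟨⟨?_, by rw [hv2]; linarith⟩, by rw [hv1]; linarith⟩
      rw [abs_of_nonneg (by rw [hv1]; linarith), abs_of_nonneg (by rw [hv2]; linarith), hv1, hv2]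
      linarith
  have hul : volume ((Omg ∩ {v | 0 ≤ v.2}) \ {v | 0 ≤ v.1}) = ENNReal.ofReal (1 / 2) := by
    have hTri : Tri (-1, 0) (0, 1) = {v : ℝ × ℝ | v.1 ≤ 0 ∧ 0 ≤ v.2 ∧ v.2 - v.1 ≤ 1} := by
      ext v
      rw [mem_Tri, mem_setOf_eq]
      constructor
      · rintro ⟨a, b, ha, hb, hab, hv1, hv2⟩
        norm_num at hv1 hv2
        exact ⟨by rw [hv1]; linarith, by rw [hv2]; linarith, by rw [hv1, hv2]; linarith⟩
      · rintro ⟨hv1, hv2, hΩ⟩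
        exact ⟨-v.1, v.2, by linarith, hv2, by linarith, by norm_num, by norm_num⟩
    have hsub : (Omg ∩ {v | 0 ≤ v.2}) \ {v | 0 ≤ v.1} ⊆ Tri (-1, 0) (0, 1) := by
      rintro v ⟨⟨hΩ, hv2⟩, hv1⟩
      simp only [mem_setOf_eq, not_le] at hv1 hv2
      simp only [Omg, mem_setOf_eq] at hΩ
      rw [abs_of_neg hv1, abs_of_nonneg hv2] at hΩ
      rw [hTri, mem_setOf_eq]
      exact ⟨hv1.le, hv2, by linarith⟩
    have hdiff : Tri (-1, 0) (0, 1) \ ((Omg ∩ {v | 0 ≤ v.2}) \ {v | 0 ≤ v.1}) ⊆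
        {v : ℝ × ℝ | v.1 = 0} := by
      rintro v ⟨hvT, hvn⟩
      rw [hTri, mem_setOf_eq] at hvT
      obtain ⟨hv1, hv2, hΩ⟩ := hvT
      by_contra hne
      have hv1' : v.1 < 0 := lt_of_le_of_ne hv1 hne
      apply hvn
      refine ⟨⟨?_, by simp only [mem_setOf_eq]; linarith⟩, by simp only [mem_setOf_eq]; linarith⟩
      simp only [Omg, mem_setOf_eq]
      rw [abs_of_neg hv1', abs_of_nonneg hv2]
      linarith
    rw [← vol_sandwich hsub hdiff null_v1, volume_Tri]
    norm_num
  have hll : volume ((Omg \ {v | 0 ≤ v.2}) \ {v | 0 ≤ v.1}) = ENNReal.ofReal (1 / 2) := by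
    have hTri : Tri (-1, 0) (0, -1) = {v : ℝ × ℝ | v.1 ≤ 0 ∧ v.2 ≤ 0 ∧ -v.1 - v.2 ≤ 1} := by
      ext v
      rw [mem_Tri, mem_setOf_eq]
      constructor
      · rintro ⟨a, b, ha, hb, hab, hv1, hv2⟩
        norm_num at hv1 hv2
        exact ⟨by rw [hv1]; linarith, by rw [hv2]; linarith, by rw [hv1, hv2]; linarith⟩
      · rintro ⟨hv1, hv2, hΩ⟩
        exact ⟨-v.1, -v.2, by linarith, by linarith, by linarith, by norm_num, by norm_num⟩
    have hsub : (Omg \ {v | 0 ≤ v.2}) \ {v | 0 ≤ v.1} ⊆ Tri (-1, 0) (0, -1) := by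
      rintro v ⟨⟨hΩ, hv2⟩, hv1⟩
      simp only [mem_setOf_eq, not_le] at hv1 hv2
      simp only [Omg, mem_setOf_eq] at hΩ
      rw [abs_of_neg hv1, abs_of_neg hv2] at hΩ
      rw [hTri, mem_setOf_eq]
      exact ⟨hv1.le, hv2.le, by linarith⟩
    have hdiff : Tri (-1, 0) (0, -1) \ ((Omg \ {v | 0 ≤ v.2}) \ {v | 0 ≤ v.1}) ⊆
        {v : ℝ × ℝ | v.1 = 0} ∪ {v : ℝ × ℝ | v.2 = 0} := by
      rintro v ⟨hvT, hvn⟩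
      rw [hTri, mem_setOf_eq] at hvT
      obtain ⟨hv1, hv2, hΩ⟩ := hvT
      by_cases hne1 : v.1 = 0
      · exact Or.inl hne1
      by_cases hne2 : v.2 = 0
      · exact Or.inr hne2
      exfalso
      have hv1' : v.1 < 0 := lt_of_le_of_ne hv1 hne1
      have hv2' : v.2 < 0 := lt_of_le_of_ne hv2 hne2
      apply hvn
      refine ⟨⟨?_, by simp only [mem_setOf_eq]; linarith⟩, by simp only [mem_setOf_eq]; linarith⟩
      simp only [Omg, mem_setOf_eq]
      rw [abs_of_neg hv1', abs_of_neg hv2']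
      linarith
    rw [← vol_sandwich hsub hdiff (measure_union_null null_v1 null_v2), volume_Tri]
    norm_num
  have hlr : volume ((Omg \ {v | 0 ≤ v.2}) ∩ {v | 0 ≤ v.1}) = ENNReal.ofReal (1 / 2) := by
    have hTri : Tri (1, 0) (0, -1) = {v : ℝ × ℝ | 0 ≤ v.1 ∧ v.2 ≤ 0 ∧ v.1 - v.2 ≤ 1} := by
      ext v
      rw [mem_Tri, mem_setOf_eq]
      constructor
      · rintro ⟨a, b, ha, hb, hab, hv1, hv2⟩
        norm_num at hv1 hv2
        exact ⟨by rw [hv1]; linarith, by rw [hv2]; linarith, by rw [hv1, hv2]; linarith⟩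
      · rintro ⟨hv1, hv2, hΩ⟩
        exact ⟨v.1, -v.2, hv1, by linarith, by linarith, by norm_num, by norm_num⟩
    have hsub : (Omg \ {v | 0 ≤ v.2}) ∩ {v | 0 ≤ v.1} ⊆ Tri (1, 0) (0, -1) := by
      rintro v ⟨⟨hΩ, hv2⟩, hv1⟩
      simp only [mem_setOf_eq, not_le] at hv1 hv2
      simp only [Omg, mem_setOf_eq] at hΩ
      rw [abs_of_nonneg hv1, abs_of_neg hv2] at hΩ
      rw [hTri, mem_setOf_eq]
      exact ⟨hv1, hv2.le, by linarith⟩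
    have hdiff : Tri (1, 0) (0, -1) \ ((Omg \ {v | 0 ≤ v.2}) ∩ {v | 0 ≤ v.1}) ⊆
        {v : ℝ × ℝ | v.2 = 0} := by
      rintro v ⟨hvT, hvn⟩
      rw [hTri, mem_setOf_eq] at hvT
      obtain ⟨hv1, hv2, hΩ⟩ := hvT
      by_contra hne
      have hv2' : v.2 < 0 := lt_of_le_of_ne hv2 hne
      apply hvn
      refine ⟨⟨?_, by simp only [mem_setOf_eq]; linarith⟩, by simp only [mem_setOf_eq]; exact hv1⟩
      simp only [Omg, mem_setOf_eq]
      rw [abs_of_nonneg hv1, abs_of_neg hv2']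
      linarith
    rw [← vol_sandwich hsub hdiff null_v2, volume_Tri]
    norm_num
  rw [← hsplit, ← hsplit2, ← hsplit3, hur, hul, hll, hlr, volume_Tri]
  rw [show (1:ℝ) * 1 - 0 * 0 = 1 by ring, abs_one,
    ← ENNReal.ofReal_add (by norm_num) (by norm_num),
    ← ENNReal.ofReal_add (by norm_num) (by norm_num)]
  norm_num

noncomputable def Qp (t : ℝ) : ℝ × ℝ :=
  if t ≤ 1 then (1 - t, t) else if t ≤ 2 then (1 - t, 2 - t)
  else if t ≤ 3 then (t - 3, 2 - t) else (t - 3, t - 4)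

lemma sector_Q {t : ℝ} (h0 : 0 ≤ t) (h4 : t < 4) :
    volume {v | v ∈ Omg ∧ polarAngle v ≤ polarAngle (Qp t)} = ENNReal.ofReal (t / 2) := by
  unfold Qp
  split_ifs with h1 h2 h3
  · rcases h0.lt_or_eq with h | h
    · exact vol_case1 h h1
    · rw [← h]
      norm_num
      exact vol_case0
  · exact vol_case2 (by linarith) h2
  · exact vol_case3 (by linarith) h3
  · exact vol_case4 (by linarith) h4

lemma isClosed_Omg : IsClosed Omg :=
  isClosed_le ((continuous_fst.abs).add (continuous_snd.abs)) continuous_const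

lemma frontier_sub : frontier Omg ⊆ {v : ℝ × ℝ | |v.1| + |v.2| = 1} := by
  intro v hv
  have h1 : v ∈ Omg := by
    have := hv.1
    rwa [isClosed_Omg.closure_eq] at this
  have h2 : v ∉ interior Omg := hv.2
  have h1' : |v.1| + |v.2| ≤ 1 := h1
  rcases h1'.lt_or_eq with h | h
  · exfalso
    apply h2
    apply mem_interior.2
    refine ⟨{v : ℝ × ℝ | |v.1| + |v.2| < 1}, fun w hw => show |w.1| + |w.2| ≤ 1 from le_of_lt hw, ?_, h⟩
    exact isOpen_lt ((continuous_fst.abs).add (continuous_snd.abs)) continuous_const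
  · exact h

lemma Q_surj {x : ℝ × ℝ} (hx : |x.1| + |x.2| = 1) : ∃ t, 0 ≤ t ∧ t < 4 ∧ Qp t = x := by
  rcases le_or_gt 0 x.2 with h2 | h2
  · rcases le_or_gt 0 x.1 with h1 | h1
    · rw [abs_of_nonneg h1, abs_of_nonneg h2] at hx
      refine ⟨x.2, h2, by linarith, ?_⟩
      rw [Qp, if_pos (by linarith : x.2 ≤ 1)]
      exact Prod.ext (by simp; try linarith) rfl
    · rw [abs_of_neg h1, abs_of_nonneg h2] at hx
      refine ⟨2 - x.2, by linarith, by linarith, ?_⟩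
      rw [Qp, if_neg (by linarith), if_pos (by linarith)]
      exact Prod.ext (by simp; try linarith) (by simp; try linarith)
  · rcases le_or_gt 0 x.1 with h1 | h1
    · rw [abs_of_nonneg h1, abs_of_neg h2] at hx
      refine ⟨3 + x.1, by linarith, by linarith, ?_⟩
      rcases h1.lt_or_eq with h1' | h1'
      · rw [Qp, if_neg (by linarith), if_neg (by linarith), if_neg (by linarith)]
        exact Prod.ext (by simp) (by simp; try linarith)
      · rw [Qp, if_neg (by linarith), if_neg (by linarith), if_pos (by linarith)]
        exact Prod.ext (by simp; try linarith) (by simp; try linarith)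
    · rw [abs_of_neg h1, abs_of_neg h2] at hx
      refine ⟨3 + x.1, by linarith, by linarith, ?_⟩
      rw [Qp, if_neg (by linarith), if_neg (by linarith), if_pos (by linarith)]
      exact Prod.ext (by simp) (by simp; try linarith)

lemma Qp_fst {t : ℝ} : (Qp t).1 = |t - 2| - 1 := by
  rw [Qp]
  split_ifs with h1 h2 h3
  · rw [abs_of_nonpos (by linarith)]; simp; ring
  · rw [abs_of_nonpos (by linarith)]; simp; ring
  · rw [abs_of_nonneg (by linarith)]; simp; ring
  · rw [abs_of_nonneg (by linarith)]; simp; ring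

lemma Qp_shift1 {s : ℝ} (h1 : 1 ≤ s) (h4 : s < 4) : (Qp s).2 = (Qp (s - 1)).1 := by
  rw [Qp, Qp]
  split_ifs <;> simp <;> linarith

lemma Qp_shift2 {s : ℝ} (h0 : 0 ≤ s) (h1 : s < 1) : (Qp s).2 = (Qp (s + 3)).1 := by
  rw [Qp, Qp]
  split_ifs <;> simp <;> linarith



/-- For `Ω = {|u| + |v| ≤ 1}`: `cos_Ω`, `sin_Ω` are `4`-periodic,
`cos_Ω θ = |θ − 2| − 1` on `[0, 4]`, and `sin_Ω θ = cos_Ω (θ − 1)`. -/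
theorem stmt15 (P : ℝ → ℝ × ℝ)
    (hP : IsCT {v : ℝ × ℝ | |v.1| + |v.2| ≤ 1} P) :
    (∀ θ : ℝ, P (θ + 4) = P θ) ∧
    (∀ θ ∈ Set.Icc (0 : ℝ) 4, (P θ).1 = |θ - 2| - 1) ∧
    (∀ θ : ℝ, (P θ).2 = (P (θ - 1)).1) := by
  obtain ⟨hper, hsec⟩ := hP
  have harea : 2 * area2 {v : ℝ × ℝ | |v.1| + |v.2| ≤ 1} = 4 := by
    have : area2 {v : ℝ × ℝ | |v.1| + |v.2| ≤ 1} = 2 := by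
      show (volume Omg).toReal = 2
      rw [vol_Omg, ENNReal.toReal_ofReal (by norm_num)]
    rw [this]; norm_num
  have hper4 : ∀ θ, P (θ + 4) = P θ := by
    intro θ
    have := hper θ
    rwa [harea] at this
  have key : ∀ θ : ℝ, 0 ≤ θ → θ < 4 → P θ = Qp θ := by
    intro θ h0 h4'
    obtain ⟨hfr, hsa⟩ := hsec θ (by rw [harea]; exact ⟨h0, h4'⟩)
    have hx : |(P θ).1| + |(P θ).2| = 1 := frontier_sub hfr
    obtain ⟨t, ht0, ht4, hQt⟩ := Q_surj hx
    have h1 : sectorArea Omg (polarAngle (Qp t)) = t / 2 := by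
      rw [sectorArea, sector_Q ht0 ht4, ENNReal.toReal_ofReal (by linarith)]
    rw [hQt] at h1
    have hsa' : sectorArea Omg (polarAngle (P θ)) = θ / 2 := hsa
    have htθ : t = θ := by
      rw [h1] at hsa'
      linarith
    rw [← hQt, htθ]
  have hper'' : Function.Periodic P 4 := hper4
  refine ⟨hper4, ?_, ?_⟩
  · intro θ hθ
    rcases hθ.2.lt_or_eq with h | h
    · rw [key θ hθ.1 h, Qp_fst]
    · rw [h]
      have : P 4 = P 0 := by
        have := hper4 0
        norm_num at this
        exact this
      rw [this, key 0 le_rfl (by norm_num), Qp_fst]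
      norm_num
  · intro θ
    set n : ℤ := ⌊θ / 4⌋ with hn
    set s : ℝ := θ - n * 4 with hs
    have hs0 : 0 ≤ s := by
      have := Int.floor_le (θ / 4)
      rw [hs]
      have : (n : ℝ) * 4 ≤ θ := by
        rw [hn]
        nlinarith [Int.floor_le (θ / 4)]
      linarith
    have hs4 : s < 4 := by
      have := Int.lt_floor_add_one (θ / 4)
      rw [hs]
      nlinarith [Int.lt_floor_add_one (θ / 4)]
    have hPθ : P θ = P s := (hper''.sub_int_mul_eq n).symm
    have hPθ1 : P (θ - 1) = P (s - 1) := by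
      have h := hper''.sub_int_mul_eq (x := θ - 1) n
      rw [← h]
      congr 1
      rw [hs]; ring
    rcases le_or_gt 1 s with h1 | h1
    · rw [hPθ, hPθ1, key s hs0 hs4, key (s - 1) (by linarith) (by linarith)]
      exact Qp_shift1 h1 hs4
    · have : P (s - 1) = P (s + 3) := by
        have := hper4 (s - 1)
        rw [show s - 1 + 4 = s + 3 by ring] at this
        exact this.symm
      rw [hPθ, hPθ1, this, key s hs0 hs4, key (s + 3) (by linarith) (by linarith)]
      exact Qp_shift2 hs0 h1
end
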